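/- arXiv:2510.11338 — 12 statements merged into one kernel-verified Lean document; each statement's English description precedes it below -/
import Mathlib

section
/- For every nonnegative integer n, the double sum over k and l from 0 to n of C(n,k)*C(n+k,k)*C(n,l)*C(n+l,l)*(-2)^(k+l) / ((k+l+1)*C(k+l,k)) equals (-1)^n/(2n+1). -/
open Finset Polynomial intervalIntegral

-- Beta integral
lemma betaInt (k l : ℕ) : ∫ x in (0:ℝ)..1, x^k * (1-x)^l
    = (k.factorial * l.factorial : ℝ) / (k+l+1).factorial := by
  induction l generalizing k with
  | zero =>
    simp only [pow_zero, mul_one, integral_pow]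
    have h : ((k+0+1).factorial : ℝ) = ((k:ℝ)+1) * (k.factorial : ℝ) := by
      push_cast [show k+0+1 = k+1 from rfl, Nat.factorial_succ]; ring
    rw [h]
    have h1 : ((k:ℝ)+1) ≠ 0 := by positivity
    have h2 : (k.factorial : ℝ) ≠ 0 := by positivity
    push_cast
    field_simp
    simp
  | succ l ih =>
    have hu : ∀ x ∈ Set.uIcc (0:ℝ) 1, HasDerivAt (fun x : ℝ => (1-x)^(l+1))
        (-( (l+1) * (1-x)^l)) x := by
      intro x _
      have h1 : HasDerivAt (fun x : ℝ => 1 - x) (-1) x := by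
        simpa using (hasDerivAt_id x).const_sub 1
      have := h1.pow (l+1)
      refine this.congr_deriv ?_
      rw [Nat.add_sub_cancel]; push_cast; ring
    have hv : ∀ x ∈ Set.uIcc (0:ℝ) 1, HasDerivAt (fun x : ℝ => x^(k+1)/(k+1))
        (x^k) x := by
      intro x _
      have := (hasDerivAt_pow (k+1) x).div_const (k+1)
      refine this.congr_deriv ?_
      rw [Nat.add_sub_cancel]; push_cast; field_simp
    have hiu : IntervalIntegrable (fun x : ℝ => -((l+1) * (1-x)^l)) MeasureTheory.volume 0 1 :=
      (Continuous.intervalIntegrable (by continuity) _ _)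
    have hiv : IntervalIntegrable (fun x : ℝ => x^k) MeasureTheory.volume 0 1 :=
      (Continuous.intervalIntegrable (by continuity) _ _)
    have ibp := integral_mul_deriv_eq_deriv_mul hu hv hiu hiv
    -- ibp : ∫ (1-x)^(l+1) * x^k = ... - ∫ (-( (l+1)(1-x)^l)) * (x^(k+1)/(k+1))
    have key : ∫ x in (0:ℝ)..1, x^k * (1-x)^(l+1)
        = ((l:ℝ)+1)/((k:ℝ)+1) * ∫ x in (0:ℝ)..1, x^(k+1) * (1-x)^l := by
      have e1 : (∫ x in (0:ℝ)..1, x^k * (1-x)^(l+1))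
          = ∫ x in (0:ℝ)..1, (1-x)^(l+1) * x^k := by
        congr 1; ext x; ring
      rw [e1, ibp]
      have hz1 : ((0:ℝ))^(k+1) = 0 := by simp
      have hz2 : ((1:ℝ)-1)^(l+1) = 0 := by simp
      rw [hz1, hz2]
      rw [show ∫ x in (0:ℝ)..1, -((↑l + 1) * (1 - x) ^ l) * (x ^ (k + 1) / (↑k + 1))
          = ∫ x in (0:ℝ)..1, -(((l:ℝ)+1)/((k:ℝ)+1) * (x^(k+1) * (1-x)^l)) from by
        congr 1; ext x; ring]
      rw [intervalIntegral.integral_neg, ← intervalIntegral.integral_const_mul]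
      simp
    rw [key, ih (k+1)]
    have h1 : ((k+1+l+1).factorial : ℝ) ≠ 0 := by positivity
    have h2 : ((k + (l+1) + 1).factorial : ℝ) ≠ 0 := by positivity
    have e : k + (l+1) + 1 = (k+l+1) + 1 := by ring
    have e2 : k + 1 + l + 1 = (k+l+1) + 1 := by ring
    rw [e, e2]
    push_cast [Nat.factorial_succ]
    field_simp

lemma altSumPow : ∀ (n : ℕ) (d : ℕ), d < n →
    ∑ k ∈ range (n+1), (-1:ℝ)^k * (n.choose k) * (k:ℝ)^d = 0 := by
  intro n
  induction n with
  | zero => intro d hd; exact absurd hd (Nat.not_lt_zero d)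
  | succ n ih =>
    intro d hd
    rcases Nat.eq_zero_or_pos d with rfl | hdpos
    · -- d = 0
      have h := Int.alternating_sum_range_choose_of_ne (Nat.succ_ne_zero n)
      have : ((∑ i ∈ range (n + 1 + 1), (-1:ℤ) ^ i * ((n+1).choose i) : ℤ) : ℝ) = 0 := by
        rw [h]; simp
      push_cast at this
      simpa using this
    · -- d ≥ 1 : use k * C(n+1,k) = (n+1) * C(n,k-1)
      obtain ⟨e, rfl⟩ : ∃ e, d = e + 1 := ⟨d - 1, by omega⟩
      rw [Finset.sum_range_succ'] -- split off k = 0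
      simp only [Nat.cast_zero, zero_pow (Nat.succ_ne_zero e), mul_zero, add_zero]
      have key : ∀ k, (-1:ℝ)^(k+1) * ((n+1).choose (k+1)) * ((k:ℝ)+1)^(e+1)
          = -(((n:ℝ)+1) * ((-1)^k * (n.choose k) * ((k:ℝ)+1)^e)) := by
        intro k
        have h := Nat.add_one_mul_choose_eq n k
        have h' : ((n+1) * (n.choose k) : ℝ) = ((n+1).choose (k+1)) * ((k:ℝ)+1) := by
          exact_mod_cast congrArg (Nat.cast : ℕ → ℝ) h
        have : ((n+1).choose (k+1) : ℝ) * ((k:ℝ)+1)^(e+1)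
            = ((n:ℝ)+1) * (n.choose k) * ((k:ℝ)+1)^e := by
          linear_combination (-(((k:ℝ)+1)^e)) * h'
        calc (-1:ℝ)^(k+1) * ((n+1).choose (k+1)) * ((k:ℝ)+1)^(e+1)
            = (-1:ℝ)^(k+1) * (((n+1).choose (k+1) : ℝ) * ((k:ℝ)+1)^(e+1)) := by ring
          _ = (-1:ℝ)^(k+1) * (((n:ℝ)+1) * (n.choose k) * ((k:ℝ)+1)^e) := by rw [this]
          _ = -(((n:ℝ)+1) * ((-1)^k * (n.choose k) * ((k:ℝ)+1)^e)) := by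
              rw [pow_succ]; ring
      push_cast
      have : ∑ k ∈ range (n+1), (-1:ℝ)^(k+1) * ((n+1).choose (k+1)) * ((k:ℝ)+1)^(e+1)
          = -(((n:ℝ)+1) * ∑ k ∈ range (n+1), (-1)^k * (n.choose k) * ((k:ℝ)+1)^e) := by
        rw [Finset.mul_sum, ← Finset.sum_neg_distrib]
        exact Finset.sum_congr rfl fun k _ => key k
      rw [this]
      have expand : ∀ k : ℕ, ((k:ℝ)+1)^e = ∑ m ∈ range (e+1), (e.choose m) * (k:ℝ)^m := by
        intro k
        rw [add_pow]
        exact Finset.sum_congr rfl fun m _ => by rw [one_pow]; ring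
      have inner : ∑ k ∈ range (n+1), (-1:ℝ)^k * (n.choose k) * ((k:ℝ)+1)^e = 0 := by
        calc ∑ k ∈ range (n+1), (-1:ℝ)^k * (n.choose k) * ((k:ℝ)+1)^e
            = ∑ k ∈ range (n+1), ∑ m ∈ range (e+1),
                (e.choose m) * ((-1:ℝ)^k * (n.choose k) * (k:ℝ)^m) := by
              refine Finset.sum_congr rfl fun k _ => ?_
              rw [expand k, Finset.mul_sum]
              exact Finset.sum_congr rfl fun m _ => by ring
          _ = ∑ m ∈ range (e+1), (e.choose m : ℝ) *
                ∑ k ∈ range (n+1), (-1:ℝ)^k * (n.choose k) * (k:ℝ)^m := by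
              rw [Finset.sum_comm]
              exact Finset.sum_congr rfl fun m _ => by rw [Finset.mul_sum]
          _ = 0 := by
              refine Finset.sum_eq_zero fun m hm => ?_
              rw [ih m (by simp at hm; omega)]
              ring
      rw [inner]
      ring

lemma altSumPoly (n : ℕ) (p : ℝ[X]) (hp : p.natDegree < n) :
    ∑ k ∈ range (n+1), (-1:ℝ)^k * (n.choose k) * p.eval (k:ℝ) = 0 := by
  calc ∑ k ∈ range (n+1), (-1:ℝ)^k * (n.choose k) * p.eval (k:ℝ)
      = ∑ k ∈ range (n+1), ∑ d ∈ range (p.natDegree+1),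
          p.coeff d * ((-1:ℝ)^k * (n.choose k) * (k:ℝ)^d) := by
        refine Finset.sum_congr rfl fun k _ => ?_
        rw [eval_eq_sum_range, Finset.mul_sum]
        exact Finset.sum_congr rfl fun d _ => by ring
    _ = ∑ d ∈ range (p.natDegree+1), p.coeff d *
          ∑ k ∈ range (n+1), (-1:ℝ)^k * (n.choose k) * (k:ℝ)^d := by
        rw [Finset.sum_comm]
        exact Finset.sum_congr rfl fun d _ => by rw [Finset.mul_sum]
    _ = 0 := by
        refine Finset.sum_eq_zero fun d hd => ?_
        rw [altSumPow n d (by simp at hd; omega)]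
        ring

lemma prodAsc (n k : ℕ) : ∏ i ∈ range n, ((k:ℝ)+i+1)
    = ((n+k).factorial : ℝ) / (k.factorial : ℝ) := by
  induction n with
  | zero =>
    have h : (k.factorial:ℝ) ≠ 0 := by positivity
    simp [div_self h]
  | succ n ih =>
    rw [Finset.prod_range_succ, ih]
    have h1 : (k.factorial : ℝ) ≠ 0 := by positivity
    have : ((n+1+k).factorial : ℝ) = ((n+k).factorial : ℝ) * ((k:ℝ)+n+1) := by
      rw [show n+1+k = (n+k)+1 by ring, Nat.factorial_succ]
      push_cast; ring
    rw [this]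
    field_simp

lemma castChooseNK (n k : ℕ) : (((n+k).choose k : ℕ) : ℝ)
    = ((n+k).factorial : ℝ) / ((k.factorial : ℝ) * (n.factorial : ℝ)) := by
  rw [Nat.cast_choose ℝ (Nat.le_add_left k n)]
  congr 2
  simp

lemma momLt (n j : ℕ) (hj : j < n) :
    ∑ k ∈ range (n+1), (-1:ℝ)^k * (n.choose k) * ((n+k).choose k) / ((k:ℝ)+j+1) = 0 := by
  set p : ℝ[X] := ∏ i ∈ (range n).erase j, (X + C ((i:ℝ)+1)) with hp
  have hdeg : p.natDegree < n := by
    rw [hp, Polynomial.natDegree_prod _ _ (fun i _ => X_add_C_ne_zero _)]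
    simp only [natDegree_X_add_C]
    rw [Finset.sum_const, smul_eq_mul, mul_one]
    rw [Finset.card_erase_of_mem (Finset.mem_range.2 hj), Finset.card_range]
    omega
  have heval : ∀ k : ℕ, p.eval (k:ℝ) * ((k:ℝ)+j+1) * (k.factorial : ℝ) = ((n+k).factorial : ℝ) := by
    intro k
    have h2 : ∀ i : ℕ, eval (k:ℝ) (X + C ((i:ℝ)+1)) = (k:ℝ)+i+1 := fun i => by
      simp [add_assoc]
    have h1 : p.eval (k:ℝ) * ((k:ℝ)+j+1)
        = ∏ i ∈ range n, ((k:ℝ)+i+1) := by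
      rw [hp, Polynomial.eval_prod]
      calc (∏ i ∈ (range n).erase j, eval (k:ℝ) (X + C ((i:ℝ)+1))) * ((k:ℝ)+j+1)
          = (∏ i ∈ (range n).erase j, ((k:ℝ)+i+1)) * ((k:ℝ)+j+1) := by
            rw [Finset.prod_congr rfl fun i _ => h2 i]
        _ = ∏ i ∈ range n, ((k:ℝ)+i+1) :=
            Finset.prod_erase_mul _ _ (Finset.mem_range.2 hj)
    rw [h1, prodAsc]
    have h : (k.factorial:ℝ) ≠ 0 := by positivity
    field_simp
  have hterm : ∀ k : ℕ, (-1:ℝ)^k * (n.choose k) * ((n+k).choose k) / ((k:ℝ)+j+1)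
      = (1/(n.factorial:ℝ)) * ((-1:ℝ)^k * (n.choose k) * p.eval (k:ℝ)) := by
    intro k
    have hnf : (n.factorial : ℝ) ≠ 0 := by positivity
    rw [castChooseNK]
    have hkjf : (k.factorial:ℝ) * ((k:ℝ)+j+1) ≠ 0 := by positivity
    have hE : p.eval (k:ℝ) = ((n+k).factorial:ℝ)/((k.factorial:ℝ)*((k:ℝ)+j+1)) := by
      rw [eq_div_iff hkjf]
      linear_combination heval k
    rw [hE]
    have hkj : ((k:ℝ)+j+1) ≠ 0 := by positivity
    have hkf : (k.factorial:ℝ) ≠ 0 := by positivity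
    field_simp
  calc ∑ k ∈ range (n+1), (-1:ℝ)^k * (n.choose k) * ((n+k).choose k) / ((k:ℝ)+j+1)
      = (1/(n.factorial:ℝ)) * ∑ k ∈ range (n+1), (-1:ℝ)^k * (n.choose k) * p.eval (k:ℝ) := by
        rw [Finset.mul_sum]
        exact Finset.sum_congr rfl fun k _ => hterm k
    _ = 0 := by rw [altSumPoly n p hdeg]; ring

lemma binomSum (n j : ℕ) : ∑ k ∈ range (n+1), (-1:ℝ)^k * (n.choose k) / ((k:ℝ)+j+1)
    = ((j.factorial * n.factorial : ℝ)) / ((j+n+1).factorial) := by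
  have hterm : ∀ k : ℕ, (-1:ℝ)^k * (n.choose k) / ((k:ℝ)+j+1)
      = ∫ x in (0:ℝ)..1, (-1:ℝ)^k * (n.choose k) * x^(j+k) := by
    intro k
    rw [intervalIntegral.integral_const_mul, integral_pow]
    push_cast
    rw [one_pow]
    ring_nf
  rw [Finset.sum_congr rfl fun k _ => hterm k]
  rw [← intervalIntegral.integral_finset_sum (fun k _ =>
    (Continuous.intervalIntegrable (by continuity) _ _))]
  have hpt : ∀ x : ℝ, ∑ k ∈ range (n+1), (-1:ℝ)^k * (n.choose k) * x^(j+k)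
      = x^j * (1-x)^n := by
    intro x
    have hb : (1-x)^n = ∑ k ∈ range (n+1), (-x)^k * 1^(n-k) * (n.choose k) := by
      rw [show (1:ℝ) - x = -x + 1 by ring, add_pow]
    rw [hb, Finset.mul_sum]
    refine Finset.sum_congr rfl fun k _ => ?_
    rw [pow_add, neg_pow]
    ring
  rw [intervalIntegral.integral_congr (fun x _ => hpt x), betaInt]

lemma momEq (n : ℕ) :
    ∑ k ∈ range (n+1), (-1:ℝ)^k * (n.choose k) * ((n+k).choose k) / ((k:ℝ)+n+1)
    = (-1:ℝ)^n * ((n.factorial * n.factorial : ℝ)) / ((2*n+1).factorial) := by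
  rcases Nat.eq_zero_or_pos n with rfl | hn
  · norm_num
  set P0 : ℝ[X] := ∏ i ∈ range n, (X + C ((i:ℝ)+1)) with hP0
  set r : ℝ := (-1:ℝ)^n * n.factorial with hr
  have hP0eval : ∀ k : ℕ, P0.eval (k:ℝ) = ((n+k).factorial : ℝ) / (k.factorial : ℝ) := by
    intro k
    rw [hP0, Polynomial.eval_prod]
    rw [Finset.prod_congr rfl (fun i _ => by
      simp [add_assoc] : ∀ i ∈ range n, eval (k:ℝ) (X + C ((i:ℝ)+1)) = (k:ℝ)+i+1)]
    exact prodAsc n k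
  have hprodneg : ∀ m : ℕ, ∏ i ∈ range m, ((i:ℝ) - (m:ℝ)) = (-1:ℝ)^m * m.factorial := by
    intro m
    induction m with
    | zero => simp
    | succ m ih =>
      rw [Finset.prod_range_succ']
      have h1 : ∀ i : ℕ, ((i+1:ℕ):ℝ) - ((m+1:ℕ):ℝ) = (i:ℝ) - m := by intro i; push_cast; ring
      rw [Finset.prod_congr rfl fun i _ => h1 i, ih]
      push_cast [Nat.factorial_succ]
      ring
  have hroot : (P0 - C r).IsRoot (-((n:ℝ)+1)) := by
    have : P0.eval (-((n:ℝ)+1)) = ∏ i ∈ range n, ((i:ℝ) - n) := by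
      rw [hP0, Polynomial.eval_prod]
      exact Finset.prod_congr rfl fun i _ => by simp; ring
    simp only [IsRoot, eval_sub, eval_C, this, hprodneg n, hr]
    ring
  obtain ⟨q, hq⟩ := Polynomial.dvd_iff_isRoot.mpr hroot
  have hdegP0 : P0.natDegree = n := by
    rw [hP0, Polynomial.natDegree_prod _ _ (fun i _ => X_add_C_ne_zero _)]
    simp only [natDegree_X_add_C, Finset.sum_const, smul_eq_mul, mul_one, Finset.card_range]
  have hsub : (P0 - C r).natDegree = n := by rw [natDegree_sub_C, hdegP0]
  have hq0 : q ≠ 0 := by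
    intro h
    rw [h, mul_zero] at hq
    rw [hq] at hsub
    simp at hsub
    omega
  have hdegq : q.natDegree < n := by
    have := hsub
    rw [hq, Polynomial.natDegree_mul (X_sub_C_ne_zero _) hq0, natDegree_X_sub_C] at this
    omega
  have hevalq : ∀ k : ℕ, P0.eval (k:ℝ) = ((k:ℝ)+n+1) * q.eval (k:ℝ) + r := by
    intro k
    have := congrArg (Polynomial.eval (k:ℝ)) hq
    simp only [eval_sub, eval_C, eval_mul, eval_X, eval_add] at this
    linear_combination this
  have hterm : ∀ k : ℕ, (-1:ℝ)^k * (n.choose k) * ((n+k).choose k) / ((k:ℝ)+n+1)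
      = (1/(n.factorial:ℝ)) * ((-1:ℝ)^k * (n.choose k) * q.eval (k:ℝ))
        + (-1:ℝ)^n * ((-1:ℝ)^k * (n.choose k) / ((k:ℝ)+n+1)) := by
    intro k
    have hkn : ((k:ℝ)+n+1) ≠ 0 := by positivity
    have hnf : (n.factorial:ℝ) ≠ 0 := by positivity
    have hkf : (k.factorial:ℝ) ≠ 0 := by positivity
    rw [castChooseNK]
    have hPk : ((n+k).factorial : ℝ) / (k.factorial : ℝ) = ((k:ℝ)+n+1) * q.eval (k:ℝ) + r := by
      rw [← hevalq k, hP0eval k]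
    have hPk' : ((n+k).factorial : ℝ) = (((k:ℝ)+n+1) * q.eval (k:ℝ) + r) * (k.factorial:ℝ) := by
      rw [← hPk]; field_simp
    rw [hPk', hr]
    field_simp
  rw [Finset.sum_congr rfl fun k _ => hterm k, Finset.sum_add_distrib]
  rw [← Finset.mul_sum, ← Finset.mul_sum]
  rw [show (∑ k ∈ range (n+1), (-1:ℝ)^k * (n.choose k) * q.eval (k:ℝ)) = 0 from
    altSumPoly n q hdegq]
  rw [binomSum n n]
  rw [show n+n+1 = 2*n+1 by ring]
  ring


noncomputable def Mm (n j : ℕ) : ℝ :=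
  ∑ k ∈ range (n+1), (-1:ℝ)^k * (n.choose k) * ((n+k).choose k) / ((k:ℝ)+j+1)

lemma momLtM (n j : ℕ) (hj : j < n) : Mm n j = 0 := momLt n j hj

lemma momEqM (n : ℕ) : Mm n n = (-1:ℝ)^n * ((n.factorial * n.factorial : ℝ)) / ((2*n+1).factorial) :=
  momEq n

noncomputable def phi (n : ℕ) (u : ℝ) : ℝ :=
  ∑ k ∈ range (n+1), (-1:ℝ)^k * (n.choose k) * ((n+k).choose k) * u^k

lemma contPhi (n : ℕ) : Continuous (phi n) := by
  unfold phi
  exact continuous_finset_sum _ fun k _ => by continuity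

lemma stepB (n : ℕ) : ∫ x in (0:ℝ)..1, phi n (2*x) * phi n (2-2*x)
    = ∫ u in (0:ℝ)..1, phi n u * phi n (2-u) := by
  set h : ℝ → ℝ := fun u => phi n u * phi n (2-u) with hh
  have hcont : Continuous h := by
    apply Continuous.mul (contPhi n)
    exact (contPhi n).comp (by continuity)
  have hint : ∀ a b : ℝ, IntervalIntegrable h MeasureTheory.volume a b :=
    fun a b => hcont.intervalIntegrable a b
  have h1 : ∫ x in (0:ℝ)..1, phi n (2*x) * phi n (2-2*x) = ∫ x in (0:ℝ)..1, h (2*x) :=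
    intervalIntegral.integral_congr fun x _ => rfl
  have hsym : ∀ u : ℝ, h (2-u) = h u := by
    intro u
    simp only [hh]
    rw [show (2:ℝ) - (2-u) = u by ring]
    ring
  have h2 : ∫ u in (1:ℝ)..2, h u = ∫ u in (0:ℝ)..1, h u := by
    have t1 : ∫ x in (0:ℝ)..1, h (2-x) = ∫ x in ((2:ℝ)-1)..((2:ℝ)-0), h x :=
      intervalIntegral.integral_comp_sub_left h 2
    have t2 : ∫ x in (0:ℝ)..1, h (2-x) = ∫ x in (0:ℝ)..1, h x :=
      intervalIntegral.integral_congr fun u _ => hsym u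
    rw [show (2:ℝ)-1 = 1 by norm_num, show (2:ℝ)-0 = 2 by norm_num] at t1
    rw [← t1, t2]
  have h3 : ∫ u in (0:ℝ)..2, h u = 2 * ∫ u in (0:ℝ)..1, h u := by
    rw [← intervalIntegral.integral_add_adjacent_intervals (hint 0 1) (hint 1 2), h2]
    ring
  rw [h1, intervalIntegral.integral_comp_mul_left h two_ne_zero]
  rw [show (2:ℝ)*0 = 0 by norm_num, show (2:ℝ)*1 = 2 by norm_num, h3, smul_eq_mul]
  ring

lemma stepA (n : ℕ) :
    ∑ k ∈ Finset.range (n+1), ∑ l ∈ Finset.range (n+1),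
      ((n.choose k : ℝ) * ((n+k).choose k) * (n.choose l) * ((n+l).choose l) * (-2)^(k+l))
        / (((k : ℝ) + l + 1) * ((k+l).choose k))
    = ∫ x in (0:ℝ)..1, phi n (2*x) * phi n (2-2*x) := by
  have hpt : ∀ x : ℝ, phi n (2*x) * phi n (2-2*x)
      = ∑ k ∈ range (n+1), ∑ l ∈ range (n+1),
          ((-1:ℝ)^k * (n.choose k) * ((n+k).choose k)) * ((-1:ℝ)^l * (n.choose l) * ((n+l).choose l))
            * (2^(k+l) * (x^k * (1-x)^l)) := by
    intro x
    unfold phi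
    rw [Finset.sum_mul_sum]
    refine Finset.sum_congr rfl fun k _ => Finset.sum_congr rfl fun l _ => ?_
    have e1 : (2*x)^k = 2^k * x^k := by rw [mul_pow]
    have e2 : (2-2*x)^l = 2^l * (1-x)^l := by rw [show (2:ℝ)-2*x = 2*(1-x) by ring, mul_pow]
    rw [e1, e2, pow_add]
    ring
  rw [intervalIntegral.integral_congr (fun x _ => hpt x)]
  rw [intervalIntegral.integral_finset_sum (fun k _ =>
    (Continuous.intervalIntegrable (by continuity) _ _))]
  refine Finset.sum_congr rfl fun k _ => ?_
  rw [intervalIntegral.integral_finset_sum (fun l _ =>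
    (Continuous.intervalIntegrable (by continuity) _ _))]
  refine Finset.sum_congr rfl fun l _ => ?_
  rw [intervalIntegral.integral_const_mul, intervalIntegral.integral_const_mul, betaInt]
  -- now pure arithmetic
  have hnat : (k+l).choose k * k.factorial * l.factorial = (k+l).factorial := by
    rw [add_comm k l]
    calc (l+k).choose k * k.factorial * l.factorial
        = (l+k).choose k * l.factorial * k.factorial := by ring
      _ = (l+k).factorial := Nat.add_choose_mul_factorial_mul_factorial l k
  have h1 : ((k+l).choose k : ℝ) * (k.factorial : ℝ) * (l.factorial : ℝ)
      = ((k+l).factorial : ℝ) := by exact_mod_cast congrArg (Nat.cast : ℕ → ℝ) hnat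
  have hD : (0:ℝ) < (k:ℝ)+l+1 := by positivity
  have hC : (0:ℝ) < ((k+l).choose k : ℝ) := by
    exact_mod_cast Nat.choose_pos (Nat.le_add_right k l)
  have hG : (0:ℝ) < ((k+l).factorial : ℝ) := by positivity
  have hfact : ((k+l+1).factorial : ℝ) = ((k:ℝ)+l+1) * ((k+l).factorial:ℝ) := by
    rw [Nat.factorial_succ]; push_cast; ring
  have hneg : ((-2:ℝ))^(k+l) = (-1:ℝ)^k * (-1:ℝ)^l * 2^(k+l) := by
    rw [show (-2:ℝ) = -1*2 by norm_num, mul_pow, pow_add]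
  have key : (1:ℝ)/(((k:ℝ)+l+1) * ((k+l).choose k:ℝ))
      = (k.factorial:ℝ)*(l.factorial:ℝ)/(((k:ℝ)+l+1) * ((k+l).factorial:ℝ)) := by
    rw [div_eq_div_iff (mul_pos hD hC).ne' (mul_pos hD hG).ne']
    linear_combination (-((k:ℝ)+l+1)) * h1
  calc ((n.choose k : ℝ) * ((n+k).choose k) * (n.choose l) * ((n+l).choose l) * (-2)^(k+l))
        / (((k : ℝ) + l + 1) * ((k+l).choose k))
      = ((n.choose k : ℝ) * ((n+k).choose k) * (n.choose l) * ((n+l).choose l)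
          * ((-1:ℝ)^k * (-1:ℝ)^l * 2^(k+l)))
          * ((1:ℝ)/(((k:ℝ)+l+1) * ((k+l).choose k:ℝ))) := by rw [← hneg]; ring
    _ = ((n.choose k : ℝ) * ((n+k).choose k) * (n.choose l) * ((n+l).choose l)
          * ((-1:ℝ)^k * (-1:ℝ)^l * 2^(k+l)))
          * ((k.factorial:ℝ)*(l.factorial:ℝ)/(((k:ℝ)+l+1) * ((k+l).factorial:ℝ))) := by
        rw [key]
    _ = ((-1:ℝ)^k * (n.choose k) * ((n+k).choose k)) * ((-1:ℝ)^l * (n.choose l) * ((n+l).choose l))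
          * (2^(k+l) * ((k.factorial * l.factorial : ℝ) / ((k+l+1).factorial))) := by
        rw [hfact]; push_cast; ring

lemma intPowPhi (n j : ℕ) : ∫ u in (0:ℝ)..1, phi n u * u^j = Mm n j := by
  have hpt : ∀ u : ℝ, phi n u * u^j
      = ∑ k ∈ range (n+1), (-1:ℝ)^k * (n.choose k) * ((n+k).choose k) * u^(k+j) := by
    intro u
    unfold phi
    rw [Finset.sum_mul]
    exact Finset.sum_congr rfl fun k _ => by rw [pow_add]; ring
  rw [intervalIntegral.integral_congr (fun u _ => hpt u)]
  rw [intervalIntegral.integral_finset_sum (fun k _ =>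
    (Continuous.intervalIntegrable (by continuity) _ _))]
  unfold Mm
  refine Finset.sum_congr rfl fun k _ => ?_
  rw [intervalIntegral.integral_const_mul, integral_pow]
  push_cast
  rw [one_pow]
  ring_nf

lemma stepC (n : ℕ) : ∫ u in (0:ℝ)..1, phi n u * phi n (2-u) = (-1:ℝ)^n / (2*(n:ℝ)+1) := by
  have hpt : ∀ u : ℝ, phi n u * phi n (2-u)
      = ∑ l ∈ range (n+1), ∑ j ∈ range (l+1),
          (((-1:ℝ)^l * (n.choose l) * ((n+l).choose l)) * ((l.choose j) * 2^(l-j) * (-1)^j))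
            * (phi n u * u^j) := by
    intro u
    have h2 : phi n (2-u) = ∑ l ∈ range (n+1),
        (-1:ℝ)^l * (n.choose l) * ((n+l).choose l) * ∑ j ∈ range (l+1),
          (-u)^j * 2^(l-j) * (l.choose j) := by
      unfold phi
      exact Finset.sum_congr rfl fun l _ => by
        rw [show (2:ℝ)-u = -u+2 by ring, add_pow]
    rw [h2, Finset.mul_sum]
    refine Finset.sum_congr rfl fun l _ => ?_
    rw [show ((-1:ℝ)^l * (n.choose l : ℝ) * ((n+l).choose l : ℝ)) *
          (∑ j ∈ range (l+1), (-u)^j * 2^(l-j) * (l.choose j : ℝ))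
        = ∑ j ∈ range (l+1), ((-1:ℝ)^l * (n.choose l : ℝ) * ((n+l).choose l : ℝ)) *
            ((-u)^j * 2^(l-j) * (l.choose j : ℝ)) from Finset.mul_sum _ _ _,
      Finset.mul_sum]
    refine Finset.sum_congr rfl fun j _ => ?_
    rw [neg_pow]
    ring
  rw [intervalIntegral.integral_congr (fun u _ => hpt u)]
  rw [intervalIntegral.integral_finset_sum (fun l _ =>
    (Continuous.intervalIntegrable (continuous_finset_sum _ fun j _ =>
      (show Continuous fun u => _ * (phi n u * u^j) from
        continuous_const.mul ((contPhi n).mul (continuous_pow j)))) _ _))]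
  have hinner : ∀ l ∈ range (n+1),
      (∫ u in (0:ℝ)..1, ∑ j ∈ range (l+1),
          (((-1:ℝ)^l * (n.choose l) * ((n+l).choose l)) * ((l.choose j) * 2^(l-j) * (-1)^j))
            * (phi n u * u^j))
      = ∑ j ∈ range (l+1),
          (((-1:ℝ)^l * (n.choose l) * ((n+l).choose l)) * ((l.choose j) * 2^(l-j) * (-1)^j))
            * Mm n j := by
    intro l _
    rw [intervalIntegral.integral_finset_sum (fun j _ =>
      (Continuous.intervalIntegrable
        (show Continuous fun u => _ * (phi n u * u^j) from
          continuous_const.mul ((contPhi n).mul (continuous_pow j))) _ _))]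
    exact Finset.sum_congr rfl fun j _ => by
      rw [intervalIntegral.integral_const_mul, intPowPhi]
  rw [Finset.sum_congr rfl hinner]
  rw [Finset.sum_eq_single_of_mem n (Finset.self_mem_range_succ n) (fun l hl hlne => by
    refine Finset.sum_eq_zero fun j hj => ?_
    rw [momLtM n j (by simp at hl hj ⊢; omega)]
    ring)]
  rw [Finset.sum_range_succ]
  rw [Finset.sum_eq_zero (fun j hj => by
    rw [momLtM n j (by simp at hj; exact hj)]
    ring)]
  rw [momEqM, zero_add, Nat.choose_self, Nat.sub_self, pow_zero, Nat.cast_one,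
    show n+n = 2*n from (two_mul n).symm]
  have h1 : ((2*n).choose n : ℝ) * (n.factorial:ℝ) * (n.factorial:ℝ) = ((2*n).factorial : ℝ) := by
    have h := Nat.choose_mul_factorial_mul_factorial (show n ≤ 2*n by omega)
    rw [show 2*n-n = n by omega] at h
    exact_mod_cast congrArg (Nat.cast : ℕ → ℝ) h
  have h2 : ((2*n+1).factorial : ℝ) = (2*(n:ℝ)+1) * ((2*n).factorial : ℝ) := by
    rw [Nat.factorial_succ]; push_cast; ring
  have hsq : (-1:ℝ)^n * (-1:ℝ)^n = 1 := by
    rw [← pow_add]; exact Even.neg_one_pow ⟨n, rfl⟩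
  have h3 : (2*(n:ℝ)+1) ≠ 0 := by positivity
  have h4 : ((2*n).factorial : ℝ) ≠ 0 := by positivity
  rw [h2]
  rw [show ((-1:ℝ)^n * 1 * ((2*n).choose n : ℝ) * (1*1*(-1:ℝ)^n) *
      ((-1:ℝ)^n * ((n.factorial:ℝ) * (n.factorial:ℝ)) / ((2*(n:ℝ)+1) * ((2*n).factorial:ℝ))))
      = ((-1:ℝ)^n * ((2*n).choose n : ℝ) * (-1:ℝ)^n * ((-1:ℝ)^n * ((n.factorial:ℝ)*(n.factorial:ℝ))))
        / ((2*(n:ℝ)+1) * ((2*n).factorial:ℝ)) from by ring]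
  rw [div_eq_div_iff (mul_ne_zero h3 h4) h3]
  linear_combination ((2*(n:ℝ)+1) * (-1:ℝ)^n * ((2*n).choose n:ℝ) * (n.factorial:ℝ) * (n.factorial:ℝ)) * hsq
    + ((2*(n:ℝ)+1) * (-1:ℝ)^n) * h1


theorem stmt_0 (n : ℕ) :
    ∑ k ∈ Finset.range (n+1), ∑ l ∈ Finset.range (n+1),
      ((n.choose k : ℚ) * ((n+k).choose k) * (n.choose l) * ((n+l).choose l) * (-2)^(k+l))
        / (((k : ℚ) + l + 1) * ((k+l).choose k))
    = (-1)^n / (2*(n : ℚ) + 1) := by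
  have hR : ∑ k ∈ Finset.range (n+1), ∑ l ∈ Finset.range (n+1),
      ((n.choose k : ℝ) * ((n+k).choose k) * (n.choose l) * ((n+l).choose l) * (-2)^(k+l))
        / (((k : ℝ) + l + 1) * ((k+l).choose k))
      = (-1)^n / (2*(n : ℝ) + 1) := by
    rw [stepA n, stepB n, stepC n]
  exact_mod_cast hR
end

section
/- For all nonnegative integers n and k with k ≤ n, the sum over l from 0 to n of (-1)^l/(k+l+1) * C(n+l,l)*C(n,l) equals 0 if k < n, and equals (-1)^n/((2n+1)*C(2n,n)) if k = n. -/
open Finset Nat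

lemma vand (n l : ℕ) : (n+l).choose l = ∑ j ∈ range (l+1), n.choose j * l.choose j := by
  rw [Nat.add_choose_eq, Finset.Nat.sum_antidiagonal_eq_sum_range_succ_mk]
  refine Finset.sum_congr rfl fun i hi => ?_
  simp only []
  rw [Nat.choose_symm (Nat.lt_succ_iff.mp (mem_range.mp hi))]

lemma betaSum (N : ℕ) : ∀ (a : ℚ), 0 < a →
    ∑ m ∈ range (N+1), (-1:ℚ)^m * (N.choose m) / (a + m)
      = (N ! : ℚ) / ∏ t ∈ range (N+1), (a + t) := by
  induction N with
  | zero => intro a ha; simp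
  | succ N ih =>
    intro a ha
    have hP : ∀ b : ℚ, 0 < b → (0:ℚ) < ∏ t ∈ range (N+1), (b + t) :=
      fun b hb => Finset.prod_pos (fun t _ => by positivity)
    have key : ∑ m ∈ range (N+1+1), (-1:ℚ)^m * ((N+1).choose m) / (a + m)
        = ∑ m ∈ range (N+1+1), (-1:ℚ)^m * (N.choose m) / (a + m)
          - ∑ i ∈ range (N+1), (-1:ℚ)^i * (N.choose i) / ((a+1) + i) := by
      rw [Finset.sum_range_succ' (fun m => (-1:ℚ)^m * (((N+1).choose m : ℕ) : ℚ) / (a + m)) (N+1),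
          Finset.sum_range_succ' (fun m => (-1:ℚ)^m * ((N.choose m : ℕ) : ℚ) / (a + m)) (N+1)]
      have hterm : ∀ k ∈ range (N+1),
          (-1:ℚ)^(k+1) * (((N+1).choose (k+1) : ℕ) : ℚ) / (a + (k+1:ℕ))
            = (-1:ℚ)^(k+1) * ((N.choose (k+1) : ℕ) : ℚ) / (a + (k+1:ℕ))
              - (-1:ℚ)^k * (N.choose k) / ((a+1) + k) := by
        intro k _
        rw [Nat.choose_succ_succ]
        push_cast
        have h0 : a + (↑k + 1) ≠ 0 := by positivity
        field_simp
        ring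
      rw [Finset.sum_congr rfl hterm, Finset.sum_sub_distrib]
      simp only [Nat.choose_zero_right]
      ring
    have hnot : ∑ m ∈ range (N+1+1), (-1:ℚ)^m * (N.choose m) / (a + m)
        = ∑ m ∈ range (N+1), (-1:ℚ)^m * (N.choose m) / (a + m) := by
      rw [Finset.sum_range_succ, Nat.choose_succ_self]
      simp
    rw [key, hnot, ih a ha, ih (a+1) (by linarith)]
    have h1 : (∏ t ∈ range (N+1+1), (a + t)) = (∏ t ∈ range (N+1), (a + t)) * (a + (N+1)) := by
      rw [Finset.prod_range_succ]; push_cast; ring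
    have h2 : (∏ t ∈ range (N+1+1), (a + t)) = a * ∏ t ∈ range (N+1), ((a+1) + t) := by
      rw [Finset.prod_range_succ', mul_comm]
      congr 1
      · push_cast; ring
      · exact Finset.prod_congr rfl fun x _ => by push_cast; ring
    have hrel : (∏ t ∈ range (N+1), (a + t)) * (a + ((N:ℚ)+1))
        = a * ∏ t ∈ range (N+1), ((a+1) + t) := by
      rw [← h1, h2]
    have hPa := (hP a ha).ne'
    have hPa1 := (hP (a+1) (by linarith)).ne'
    have hfac : ((N+1)! : ℚ) = ((N:ℚ)+1) * N ! := by push_cast [Nat.factorial_succ]; ring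
    rw [h1, hfac]
    have hQ : a + ((N:ℚ)+1) ≠ 0 := by positivity
    field_simp
    linear_combination (-1:ℚ) * hrel

lemma altQ (M : ℕ) : ∑ m ∈ range (M+1), (-1:ℚ)^m * (M.choose m) = if M = 0 then 1 else 0 := by
  have h := Int.alternating_sum_range_choose (n := M)
  have h2 : ((∑ m ∈ range (M+1), (-1:ℤ)^m * (M.choose m) : ℤ) : ℚ)
      = ((if M = 0 then (1:ℤ) else 0 : ℤ) : ℚ) := congrArg (fun z : ℤ => (z:ℚ)) h
  push_cast at h2
  split_ifs with hM <;> simpa [hM] using h2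

lemma inner_alt (n i : ℕ) (hi : i ≤ n) :
    ∑ j ∈ range (n+1), (-1:ℚ)^j * (n.choose j) * (j.choose i)
      = if i = n then (-1:ℚ)^n else 0 := by
  have hsub : Ico i (n+1) ⊆ range (n+1) := by
    rw [Finset.range_eq_Ico]; exact Finset.Ico_subset_Ico (Nat.zero_le i) le_rfl
  have hz : ∀ j ∈ range (n+1), j ∉ Ico i (n+1) → (-1:ℚ)^j * (n.choose j) * (j.choose i) = 0 := by
    intro j hj hj'
    have : j < i := by
      simp only [mem_Ico, mem_range] at hj hj'
      omega
    rw [Nat.choose_eq_zero_of_lt this]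
    simp
  rw [← Finset.sum_subset hsub hz, Finset.sum_Ico_eq_sum_range]
  have hterm : ∀ m ∈ range (n+1-i),
      (-1:ℚ)^(i+m) * (n.choose (i+m)) * ((i+m).choose i)
        = ((-1:ℚ)^i * (n.choose i)) * ((-1:ℚ)^m * ((n-i).choose m)) := by
    intro m hm
    have hmn : i + m ≤ n := by simp only [mem_range] at hm; omega
    have hc : n.choose (i+m) * (i+m).choose i = n.choose i * (n-i).choose m := by
      have := Nat.choose_mul (n := n) (k := i+m) (s := i) (Nat.le_add_right i m)
      simpa using this
    have hcq : ((n.choose (i+m) : ℚ)) * ((i+m).choose i) = (n.choose i : ℚ) * ((n-i).choose m) := by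
      exact_mod_cast hc
    rw [pow_add, mul_assoc, hcq]
    ring
  rw [Finset.sum_congr rfl hterm, ← Finset.mul_sum]
  have hr : n + 1 - i = (n - i) + 1 := by omega
  rw [hr, altQ (n-i)]
  rcases eq_or_lt_of_le hi with h | h
  · subst h; simp
  · have h1 : n - i ≠ 0 := by omega
    have h2 : i ≠ n := by omega
    simp [h1, h2]

lemma lemB (n k : ℕ) (hk : k ≤ n) :
    ∑ j ∈ range (n+1), (-1:ℚ)^j * (n.choose j) * ((k+j).choose k)
      = if k = n then (-1:ℚ)^n else 0 := by
  have hv : ∀ j : ℕ, (((k+j).choose k : ℕ) : ℚ) = ∑ i ∈ range (k+1), (j.choose i : ℚ) * (k.choose i) := by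
    intro j
    rw [add_comm k j]
    exact_mod_cast congrArg (fun x : ℕ => (x : ℚ)) (vand j k)
  calc ∑ j ∈ range (n+1), (-1:ℚ)^j * (n.choose j) * ((k+j).choose k)
      = ∑ j ∈ range (n+1), ∑ i ∈ range (k+1),
          ((-1:ℚ)^j * (n.choose j) * (j.choose i)) * (k.choose i) := by
        refine Finset.sum_congr rfl fun j _ => ?_
        rw [hv j, Finset.mul_sum]
        refine Finset.sum_congr rfl fun i _ => by ring
    _ = ∑ i ∈ range (k+1), (∑ j ∈ range (n+1),
          (-1:ℚ)^j * (n.choose j) * (j.choose i)) * (k.choose i) := by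
        rw [Finset.sum_comm]
        exact Finset.sum_congr rfl fun i _ => by rw [Finset.sum_mul]
    _ = ∑ i ∈ range (k+1), (if i = n then (-1:ℚ)^n else 0) * (k.choose i) := by
        refine Finset.sum_congr rfl fun i hi => ?_
        rw [inner_alt n i (le_trans (Nat.lt_succ_iff.mp (mem_range.mp hi)) hk)]
    _ = if k = n then (-1:ℚ)^n else 0 := by
        rcases eq_or_lt_of_le hk with h | h
        · subst h
          rw [Finset.sum_eq_single k]
          · simp
          · intro i hi hik
            simp [hik]
          · intro h; simp at h
        · have : ∀ i ∈ range (k+1), (if i = n then (-1:ℚ)^n else 0) * (k.choose i) = 0 := by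
            intro i hi
            have : i ≠ n := by
              have := Nat.lt_succ_iff.mp (mem_range.mp hi); omega
            simp [this]
          rw [Finset.sum_congr rfl this]
          simp [Nat.ne_of_lt h]

lemma natId (n k j : ℕ) (hj : j ≤ n) :
    n.choose j * (n-j)! * (k+j)! = n ! * k ! * ((k+j).choose k) := by
  have h1 : n.choose j * j ! * (n-j)! = n ! := Nat.choose_mul_factorial_mul_factorial hj
  have h2 : (k+j).choose k * k ! * j ! = (k+j)! := by
    have := Nat.choose_mul_factorial_mul_factorial (Nat.le_add_right k j)
    simpa [Nat.add_sub_cancel_left] using this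
  apply Nat.eq_of_mul_eq_mul_right (Nat.factorial_pos j)
  calc n.choose j * (n-j)! * (k+j)! * j ! = (n.choose j * j ! * (n-j)!) * (k+j)! := by ring
    _ = n ! * (k+j)! := by rw [h1]
    _ = n ! * ((k+j).choose k * k ! * j !) := by rw [h2]
    _ = n ! * k ! * ((k+j).choose k) * j ! := by ring

lemma prodFac (c m : ℕ) :
    ∏ t ∈ range (m+1), (((c:ℚ)+1) + t) = ((c+(m+1))! : ℚ) / (c ! : ℚ) := by
  have h1 : ∀ M, (c+1).ascFactorial M = ∏ t ∈ range M, (c+1+t) := by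
    intro M
    induction M with
    | zero => simp
    | succ M ih => rw [Nat.ascFactorial_succ, Finset.prod_range_succ, ih]; ring
  have h1 := (h1 (m+1))
  have h2 : c ! * (c+1).ascFactorial (m+1) = (c+(m+1))! := Nat.factorial_mul_ascFactorial c (m+1)
  have h3 : ((∏ t ∈ range (m+1), (c+1+t) : ℕ) : ℚ) = ∏ t ∈ range (m+1), (((c:ℚ)+1)+t) := by
    push_cast; rfl
  rw [← h3, ← h1, eq_div_iff (by exact_mod_cast (Nat.factorial_pos c).ne')]
  rw [mul_comm]
  exact_mod_cast h2

lemma inner_main (n k j : ℕ) (hj : j ≤ n) :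
    ∑ l ∈ range (n+1), (-1:ℚ)^l / ((k:ℚ)+l+1) * ((n.choose j : ℚ) * (l.choose j)) * (n.choose l)
      = (-1:ℚ)^j * (n.choose j) * (n.choose j) * ((n-j)! : ℚ) * ((k+j)! : ℚ)
          / ((k+n+1)! : ℚ) := by
  have hsub : Ico j (n+1) ⊆ range (n+1) := by
    rw [Finset.range_eq_Ico]; exact Finset.Ico_subset_Ico (Nat.zero_le j) le_rfl
  have hz : ∀ l ∈ range (n+1), l ∉ Ico j (n+1) →
      (-1:ℚ)^l / ((k:ℚ)+l+1) * ((n.choose j : ℚ) * (l.choose j)) * (n.choose l) = 0 := by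
    intro l hl hl'
    have : l < j := by simp only [mem_Ico, mem_range] at hl hl'; omega
    rw [Nat.choose_eq_zero_of_lt this]
    simp
  rw [← Finset.sum_subset hsub hz, Finset.sum_Ico_eq_sum_range]
  set A : ℚ := (k:ℚ) + j + 1 with hA
  have hApos : 0 < A := by positivity
  have hterm : ∀ m ∈ range (n+1-j),
      (-1:ℚ)^(j+m) / ((k:ℚ)+(j+m:ℕ)+1) * ((n.choose j : ℚ) * ((j+m).choose j)) * (n.choose (j+m))
        = ((-1:ℚ)^j * (n.choose j) * (n.choose j))
            * ((-1:ℚ)^m * ((n-j).choose m) / (A + m)) := by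
    intro m hm
    have hmn : j + m ≤ n := by simp only [mem_range] at hm; omega
    have hc : n.choose (j+m) * (j+m).choose j = n.choose j * (n-j).choose m := by
      have := Nat.choose_mul (n := n) (k := j+m) (s := j) (Nat.le_add_right j m)
      simpa using this
    have hcq : ((n.choose (j+m) : ℚ)) * ((j+m).choose j) = (n.choose j : ℚ) * ((n-j).choose m) := by
      exact_mod_cast hc
    have hden : (k:ℚ)+(j+m:ℕ)+1 = A + m := by push_cast [hA]; ring
    rw [hden, pow_add]
    have hne : A + (m:ℚ) ≠ 0 := by positivity
    field_simp
    linear_combination (n.choose j : ℚ) * hcq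
  rw [Finset.sum_congr rfl hterm, ← Finset.mul_sum]
  have hr : n + 1 - j = (n - j) + 1 := by omega
  rw [hr, betaSum (n-j) A hApos]
  have hAc : A = ((k+j : ℕ):ℚ) + 1 := by push_cast [hA]; ring
  rw [hAc, prodFac (k+j) (n-j)]
  have hkn : k + j + (n - j + 1) = k + n + 1 := by omega
  rw [hkn]
  have h1 : ((k+n+1)! : ℚ) ≠ 0 := by exact_mod_cast (Nat.factorial_pos _).ne'
  have h2 : ((k+j)! : ℚ) ≠ 0 := by exact_mod_cast (Nat.factorial_pos _).ne'
  field_simp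

lemma main_sum (n k : ℕ) (hk : k ≤ n) :
    ∑ l ∈ range (n+1), (-1:ℚ)^l / ((k : ℚ) + l + 1) * (((n+l).choose l : ℕ) : ℚ) * (n.choose l)
      = (if k = n then (-1:ℚ)^n else 0) * ((n ! : ℚ) * (k ! : ℚ)) / ((k+n+1)! : ℚ) := by
  have step1 : ∀ l ∈ range (n+1),
      (-1:ℚ)^l / ((k : ℚ) + l + 1) * (((n+l).choose l : ℕ) : ℚ) * (n.choose l)
        = ∑ j ∈ range (n+1),
            (-1:ℚ)^l / ((k:ℚ)+l+1) * ((n.choose j : ℚ) * (l.choose j)) * (n.choose l) := by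
    intro l hl
    have hl' : l ≤ n := Nat.lt_succ_iff.mp (mem_range.mp hl)
    have hv : ((n+l).choose l : ℕ) = ∑ j ∈ range (n+1), n.choose j * l.choose j := by
      rw [vand n l]
      apply Finset.sum_subset (Finset.range_subset_range.2 (by omega))
      intro j _ hj
      have : l < j := by simp only [mem_range] at hj; omega
      rw [Nat.choose_eq_zero_of_lt this, Nat.mul_zero]
    have hvq : (((n+l).choose l : ℕ) : ℚ) = ∑ j ∈ range (n+1), (n.choose j : ℚ) * (l.choose j) := by
      exact_mod_cast congrArg (fun x : ℕ => (x:ℚ)) hv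
    rw [hvq, Finset.mul_sum, Finset.sum_mul]
  rw [Finset.sum_congr rfl step1, Finset.sum_comm]
  have step3 : ∀ j ∈ range (n+1),
      ∑ l ∈ range (n+1), (-1:ℚ)^l / ((k:ℚ)+l+1) * ((n.choose j : ℚ) * (l.choose j)) * (n.choose l)
        = ((-1:ℚ)^j * (n.choose j) * ((k+j).choose k)) * ((n ! : ℚ) * (k ! : ℚ) / ((k+n+1)! : ℚ)) := by
    intro j hj
    have hj' : j ≤ n := Nat.lt_succ_iff.mp (mem_range.mp hj)
    rw [inner_main n k j hj']
    have hid : ((n.choose j : ℚ)) * ((n-j)! : ℚ) * ((k+j)! : ℚ)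
        = (n ! : ℚ) * (k ! : ℚ) * ((k+j).choose k) := by
      exact_mod_cast congrArg (fun x : ℕ => (x:ℚ)) (natId n k j hj')
    have hden : ((k+n+1)! : ℚ) ≠ 0 := by exact_mod_cast (Nat.factorial_pos _).ne'
    field_simp
    linear_combination (n.choose j : ℚ) * hid
  rw [Finset.sum_congr rfl step3, ← Finset.sum_mul, lemB n k hk]
  ring

theorem stmt_2 (n k : ℕ) (hk : k ≤ n) :
    (k < n → ∑ l ∈ Finset.range (n+1),
      (-1)^l / ((k : ℚ) + l + 1) * ((n+l).choose l) * (n.choose l) = 0) ∧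
    (k = n → ∑ l ∈ Finset.range (n+1),
      (-1)^l / ((k : ℚ) + l + 1) * ((n+l).choose l) * (n.choose l)
        = (-1)^n / ((2*(n:ℚ) + 1) * ((2*n).choose n))) := by
  constructor
  · intro hlt
    rw [main_sum n k hk]
    simp [Nat.ne_of_lt hlt]
  · intro heq
    subst heq
    rw [main_sum k k le_rfl]
    simp only [if_pos rfl]
    have h2k : k + k + 1 = 2*k + 1 := by ring
    have hch : ((2*k).choose k) * k ! * k ! = (2*k)! := by
      have := Nat.choose_mul_factorial_mul_factorial (Nat.le_mul_of_pos_left k (by norm_num) : k ≤ 2*k)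
      simpa [two_mul, Nat.add_sub_cancel_left] using this
    have hfact : ((2*k+1)! : ℚ) = (2*(k:ℚ)+1) * ((2*k)! : ℚ) := by
      have : (2*k+1)! = (2*k+1) * (2*k)! := Nat.factorial_succ (2*k)
      push_cast [this]; ring
    have hchq : (((2*k).choose k : ℕ) : ℚ) * (k ! : ℚ) * (k ! : ℚ) = ((2*k)! : ℚ) := by
      exact_mod_cast congrArg (fun x : ℕ => (x:ℚ)) hch
    have hne1 : ((2*k)! : ℚ) ≠ 0 := by exact_mod_cast (Nat.factorial_pos _).ne'
    have hne2 : (((2*k).choose k : ℕ) : ℚ) ≠ 0 := by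
      exact_mod_cast (Nat.choose_pos (Nat.le_mul_of_pos_left k (by norm_num))).ne'
    have hne3 : (2*(k:ℚ)+1) ≠ 0 := by positivity
    rw [h2k, hfact]
    field_simp
    rw [if_pos trivial]
    linear_combination (-1:ℚ)^k * hchq
end

section
/- For any nonnegative integer n and any rational (or real) x, the partial fraction identity holds: the sum over l from 0 to n of (-1)^l/(x+l) * C(n+l,l)*C(n,l) equals (1-x)(2-x)···(n-x) / (x(x+1)···(x+n)), i.e. (−x+1)_n / (x)_{n+1}, provided x is not a nonpositive integer ≥ −n. -/
open Polynomial Finset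

private lemma fac_prod (k : ℕ) : ∀ n : ℕ,
    Nat.factorial k * ∏ i ∈ range n, (k+1+i) = Nat.factorial (k+n)
  | 0 => by simp
  | n+1 => by
    rw [prod_range_succ, ← mul_assoc, fac_prod k n, ← add_assoc, Nat.factorial_succ,
      Nat.add_right_comm, mul_comm]

private lemma prod_desc (k : ℕ) : ∏ i ∈ range k, (k - i) = Nat.factorial k := by
  rw [← Finset.prod_range_reflect]
  have : ∀ j ∈ range k, k - (k - 1 - j) = j + 1 := by intro j hj; rw [mem_range] at hj; omega
  rw [Finset.prod_congr rfl this, Finset.prod_range_add_one_eq_factorial]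

private lemma erase_split (n k : ℕ) (hk : k ∈ range (n+1)) :
    (range (n+1)).erase k = range k ∪ Ico (k+1) (n+1) := by
  rw [mem_range] at hk
  ext i; simp only [mem_erase, mem_range, mem_union, mem_Ico]; omega

theorem stmt_3 (n : ℕ) (x : ℚ) (hx : ∀ l : ℕ, l ≤ n → x + l ≠ 0) :
    ∑ l ∈ Finset.range (n+1), (-1)^l / (x + l) * ((n+l).choose l) * (n.choose l)
      = (∏ i ∈ Finset.range n, ((i : ℚ) + 1 - x)) / (∏ i ∈ Finset.range (n+1), (x + i)) := by
  set P : ℚ[X] := ∑ l ∈ range (n+1),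
    Polynomial.C ((-1:ℚ)^l * ((n+l).choose l) * (n.choose l)) *
      ∏ i ∈ (range (n+1)).erase l, (X + Polynomial.C (i:ℚ)) with hP
  set Q : ℚ[X] := ∏ i ∈ range n, (Polynomial.C ((i:ℚ)+1) - X) with hQ
  -- degree facts
  have hdeg_prod : ∀ l ∈ range (n+1),
      (∏ i ∈ (range (n+1)).erase l, (X + Polynomial.C (i:ℚ))).degree = (n : WithBot ℕ) := by
    intro l hl
    rw [Polynomial.degree_prod]
    have : ∀ i ∈ (range (n+1)).erase l, (X + Polynomial.C (i:ℚ)).degree = 1 := by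
      intro i _; exact Polynomial.degree_X_add_C _
    rw [Finset.sum_congr rfl this, Finset.sum_const, card_erase_of_mem hl,
      Finset.card_range, nsmul_eq_mul, mul_one]
    rfl
  have hdegP : P.degree < ((n+1 : ℕ) : WithBot ℕ) := by
    apply lt_of_le_of_lt (Polynomial.degree_sum_le _ _)
    apply Finset.sup_lt_iff (by exact_mod_cast WithBot.bot_lt_coe (n+1)) |>.mpr
    intro l hl
    calc (Polynomial.C ((-1:ℚ)^l * ((n+l).choose l) * (n.choose l)) *
          ∏ i ∈ (range (n+1)).erase l, (X + Polynomial.C (i:ℚ))).degree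
        ≤ (Polynomial.C ((-1:ℚ)^l * ((n+l).choose l) * (n.choose l))).degree +
          (∏ i ∈ (range (n+1)).erase l, (X + Polynomial.C (i:ℚ))).degree :=
          Polynomial.degree_mul_le _ _
      _ ≤ (0 : WithBot ℕ) + (n : WithBot ℕ) :=
          add_le_add Polynomial.degree_C_le (le_of_eq (hdeg_prod l hl))
      _ < ((n+1 : ℕ) : WithBot ℕ) := by
          rw [zero_add]
          exact_mod_cast Nat.lt_succ_self n
  have hdegQ : Q.degree < ((n+1 : ℕ) : WithBot ℕ) := by
    rw [hQ, Polynomial.degree_prod]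
    have : ∀ i ∈ range n, (Polynomial.C ((i:ℚ)+1) - X).degree = 1 := by
      intro i _
      rw [show Polynomial.C ((i:ℚ)+1) - X = -(X - Polynomial.C ((i:ℚ)+1)) by ring,
        Polynomial.degree_neg]
      exact Polynomial.degree_X_sub_C _
    rw [Finset.sum_congr rfl this, Finset.sum_const, Finset.card_range, nsmul_eq_mul, mul_one]
    exact_mod_cast Nat.lt_succ_self n
  -- evaluation equality at -k
  have heval : ∀ k ∈ range (n+1), P.eval (-(k:ℚ)) = Q.eval (-(k:ℚ)) := by
    intro k hk
    have hkn : k ≤ n := by rw [mem_range] at hk; omega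
    rw [hP, hQ]
    simp only [Polynomial.eval_finset_sum, Polynomial.eval_mul, Polynomial.eval_C,
      Polynomial.eval_prod, Polynomial.eval_add, Polynomial.eval_sub, Polynomial.eval_X]
    rw [Finset.sum_eq_single k]
    · -- main combinatorial computation
      rw [erase_split n k hk, Finset.prod_union (by
        apply Finset.disjoint_left.mpr; intro i hi hi'
        rw [mem_range] at hi; rw [mem_Ico] at hi'; omega)]
      have h1 : ∏ i ∈ range k, (-(k:ℚ) + i) = (-1)^k * (Nat.factorial k : ℚ) := by
        have : ∀ i ∈ range k, (-(k:ℚ) + i) = (-1) * (((k - i : ℕ) : ℚ)) := by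
          intro i hi; rw [mem_range] at hi
          rw [Nat.cast_sub hi.le]; ring
        rw [Finset.prod_congr rfl this, Finset.prod_mul_distrib, Finset.prod_const,
          Finset.card_range, ← Nat.cast_prod, prod_desc]
      have h2 : ∏ i ∈ Ico (k+1) (n+1), (-(k:ℚ) + i) = (Nat.factorial (n-k) : ℚ) := by
        have : ∀ i ∈ Ico (k+1) (n+1), (-(k:ℚ) + i) = (((i - k : ℕ) : ℚ)) := by
          intro i hi; rw [mem_Ico] at hi
          rw [Nat.cast_sub (by omega)]; ring
        rw [Finset.prod_congr rfl this, ← Nat.cast_prod]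
        congr 1
        rw [Finset.prod_Ico_eq_prod_range]
        have : ∀ j ∈ range (n+1-(k+1)), (k+1+j) - k = j + 1 := by intro j _; omega
        rw [Finset.prod_congr rfl this, Finset.prod_range_add_one_eq_factorial]
        congr 1; omega
      have h3 : ∀ i ∈ range n, ((i:ℚ) + 1 - (-(k:ℚ))) = (((k+1+i : ℕ)) : ℚ) := by
        intro i _; push_cast; ring
      rw [h1, h2, Finset.prod_congr rfl h3, ← Nat.cast_prod]
      have key : ((n+k).choose k) * (n.choose k) * (Nat.factorial k * Nat.factorial (n-k))
            * Nat.factorial k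
          = (∏ i ∈ range n, (k+1+i)) * Nat.factorial k := by
        rw [mul_comm (∏ i ∈ range n, (k+1+i)) (Nat.factorial k), fac_prod k n]
        have e1 : n.choose k * (Nat.factorial k * Nat.factorial (n-k)) = Nat.factorial n := by
          rw [← mul_assoc]; exact Nat.choose_mul_factorial_mul_factorial hkn
        calc ((n+k).choose k) * (n.choose k) * (Nat.factorial k * Nat.factorial (n-k))
              * Nat.factorial k
            = ((n+k).choose k) * (n.choose k * (Nat.factorial k * Nat.factorial (n-k)))
              * Nat.factorial k := by ring
          _ = ((n+k).choose k) * Nat.factorial n * Nat.factorial k := by rw [e1]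
          _ = ((n+k).choose k) * Nat.factorial k * Nat.factorial n := by ring
          _ = Nat.factorial (n+k) := by
              have := Nat.choose_mul_factorial_mul_factorial (Nat.le_add_left k n)
              rwa [Nat.add_sub_cancel] at this
          _ = Nat.factorial (k+n) := by rw [Nat.add_comm]
      have key' : (((n+k).choose k : ℚ)) * (n.choose k)
            * ((Nat.factorial k : ℚ) * (Nat.factorial (n-k) : ℚ))
          = ((∏ i ∈ range n, (k+1+i) : ℕ) : ℚ) := by
        have keyn : (n+k).choose k * n.choose k * (Nat.factorial k * Nat.factorial (n-k))
            = ∏ i ∈ range n, (k+1+i) :=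
          Nat.eq_of_mul_eq_mul_right (Nat.factorial_pos k) key
        exact_mod_cast congrArg (Nat.cast (R := ℚ)) keyn
      calc (-1:ℚ)^k * ((n+k).choose k) * (n.choose k)
            * (((-1)^k * (Nat.factorial k : ℚ)) * (Nat.factorial (n-k) : ℚ))
          = (((n+k).choose k : ℚ)) * (n.choose k)
            * ((Nat.factorial k : ℚ) * (Nat.factorial (n-k) : ℚ))
            * ((-1:ℚ)^k * (-1)^k) := by ring
        _ = ((∏ i ∈ range n, (k+1+i) : ℕ) : ℚ) := by
            rw [key', ← pow_add, Even.neg_one_pow ⟨k, rfl⟩, mul_one]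
    · intro l hl hlk
      have hz : (-(k:ℚ) + k) = 0 := by ring
      rw [Finset.prod_eq_zero (Finset.mem_erase.mpr ⟨Ne.symm hlk, hk⟩) hz]
      ring
    · intro h; exact absurd hk h
  have hPQ : P = Q := by
    apply Polynomial.eq_of_degrees_lt_of_eval_index_eq (v := fun l : ℕ => -(l:ℚ)) (range (n+1))
    · intro a ha b hb hab
      simpa using hab
    · rwa [Finset.card_range]
    · rwa [Finset.card_range]
    · exact heval
  -- now evaluate at x
  have hPx := congrArg (Polynomial.eval x) hPQ
  rw [hP, hQ] at hPx
  simp only [Polynomial.eval_finset_sum, Polynomial.eval_mul, Polynomial.eval_C,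
    Polynomial.eval_prod, Polynomial.eval_add, Polynomial.eval_sub, Polynomial.eval_X] at hPx
  have hne : (∏ i ∈ range (n+1), (x + i)) ≠ 0 := by
    apply Finset.prod_ne_zero_iff.mpr
    intro i hi; rw [mem_range] at hi; exact hx i (by omega)
  rw [eq_div_iff hne, ← hPx, Finset.sum_mul]
  apply Finset.sum_congr rfl
  intro l hl
  rw [mem_range] at hl
  have hxl : x + l ≠ 0 := hx l (by omega)
  have hsplit : (∏ i ∈ (range (n+1)).erase l, (x + i)) * (x + l)
      = ∏ i ∈ range (n+1), (x + i) := by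
    rw [mul_comm]
    exact Finset.mul_prod_erase (range (n+1)) (fun i => x + (i:ℚ)) (mem_range.mpr hl)
  rw [← hsplit]
  field_simp
end

section
/- For any nonnegative integers k and l, the sum over n from 0 to k+l of (-1)^n/(n+2) * C(n,l)*C(l,n-k) equals (-1)^(k+l) / C(k+l+2, l+1). -/
open Finset Polynomial

lemma aux_fwdDiff_poly : ∀ (l : ℕ) (q : ℚ[X]), q.degree < l →
    ∀ y : ℚ, (fwdDiff 1)^[l] (fun t : ℚ => q.eval t) y = 0 := by
  intro l
  induction l with
  | zero =>
    intro q hq y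
    have hq0 : q = 0 := by
      by_contra h
      exact absurd (zero_le_degree_iff.mpr h) (not_le.mpr (by exact_mod_cast hq))
    simp [hq0]
  | succ l ih =>
    intro q hq y
    rw [Function.iterate_succ_apply]
    have hdiff : fwdDiff 1 (fun t : ℚ => q.eval t)
        = fun t : ℚ => (q.comp (X + C 1) - q).eval t := by
      funext t
      simp [fwdDiff, eval_comp]
    rw [hdiff]
    apply ih
    by_cases h0 : q = 0
    · rw [h0]; simp
    · have h1d : (X + C (1:ℚ)).natDegree ≠ 0 := by
        rw [natDegree_X_add_C]; exact one_ne_zero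
      have hlc : (q.comp (X + C 1)).leadingCoeff = q.leadingCoeff := by
        rw [leadingCoeff_comp h1d, leadingCoeff_X_add_C, one_pow, mul_one]
      have hcompne : q.comp (X + C 1) ≠ 0 := by
        intro h
        apply h0
        rw [h, leadingCoeff_zero] at hlc
        exact leadingCoeff_eq_zero.mp hlc.symm
      have hdeg : (q.comp (X + C 1)).degree = q.degree := by
        rw [degree_eq_natDegree hcompne, degree_eq_natDegree h0]
        norm_cast
        rw [natDegree_comp, natDegree_X_add_C, mul_one]
      have hlt : (q.comp (X + C 1) - q).degree < q.degree := by
        have := degree_sub_lt hdeg hcompne hlc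
        rwa [hdeg] at this
      have hqle : q.degree ≤ (l : WithBot ℕ) := by
        rw [degree_eq_natDegree h0] at hq ⊢
        exact_mod_cast Nat.lt_succ_iff.mp (by exact_mod_cast hq)
      exact lt_of_lt_of_le hlt hqle

lemma aux_fwdDiff_inv (l : ℕ) (x : ℚ) : ∀ y : ℚ, 0 < x + y →
    (fwdDiff 1)^[l] (fun t : ℚ => 1 / (x + t)) y
      = (-1)^l * (Nat.factorial l) / ∏ i ∈ range (l+1), (x + y + i) := by
  induction l with
  | zero => intro y hy; simp
  | succ l ih =>
    intro y hy
    rw [Function.iterate_succ_apply']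
    have hstep : fwdDiff (1:ℚ) ((fwdDiff 1)^[l] (fun t : ℚ => 1 / (x + t))) y
        = (fwdDiff 1)^[l] (fun t : ℚ => 1 / (x + t)) (y+1)
          - (fwdDiff 1)^[l] (fun t : ℚ => 1 / (x + t)) y := rfl
    rw [hstep, ih y hy, ih (y+1) (by linarith)]
    have hpos : ∀ i : ℕ, (0:ℚ) < x + y + i := by
      intro i; have : (0:ℚ) ≤ i := by positivity
      linarith
    have hA : ∏ i ∈ range (l+2), (x + y + i)
        = (∏ i ∈ range (l+1), (x + (y+1) + i)) * (x + y) := by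
      rw [Finset.prod_range_succ' (fun i => (x + y + (i:ℚ))) (l+1)]
      congr 1
      · apply Finset.prod_congr rfl; intro i _; push_cast; ring
      · norm_num
    have hB : ∏ i ∈ range (l+2), (x + y + i)
        = (∏ i ∈ range (l+1), (x + y + i)) * (x + y + (l+1)) := by
      rw [Finset.prod_range_succ (fun i => (x + y + (i:ℚ))) (l+1)]
      push_cast; ring_nf
    have hApos : (0:ℚ) < ∏ i ∈ range (l+1), (x + (y+1) + i) := by
      apply Finset.prod_pos; intro i _
      have : (0:ℚ) ≤ i := by positivity
      linarith
    have hBpos : (0:ℚ) < ∏ i ∈ range (l+1), (x + y + i) :=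
      Finset.prod_pos (fun i _ => hpos i)
    have hxy : x + y ≠ 0 := hy.ne'
    have hxyl : x + y + ((l:ℚ)+1) ≠ 0 := by
      have : (0:ℚ) ≤ l := by positivity
      intro h; linarith [hy]
    have hPpos : (0:ℚ) < ∏ i ∈ range (l+2), (x + y + i) :=
      Finset.prod_pos (fun i _ => hpos i)
    have hAeq : ∏ i ∈ range (l+1), (x + (y+1) + i)
        = (∏ i ∈ range (l+2), (x + y + i)) / (x + y) := by
      rw [eq_div_iff hxy]; exact hA.symm
    have hBeq : ∏ i ∈ range (l+1), (x + y + i)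
        = (∏ i ∈ range (l+2), (x + y + i)) / (x + y + ((l:ℚ)+1)) := by
      rw [eq_div_iff hxyl]; exact hB.symm
    rw [hAeq, hBeq]
    have hPne := hPpos.ne'
    field_simp
    push_cast [Nat.factorial_succ]
    ring

lemma aux_sum_alt (l : ℕ) (f : ℚ → ℚ) :
    ∑ j ∈ range (l+1), (-1:ℚ)^j * (l.choose j : ℚ) * f j
      = (-1)^l * (fwdDiff 1)^[l] f 0 := by
  rw [fwdDiff_iter_eq_sum_shift, Finset.mul_sum]
  refine Finset.sum_congr rfl fun j hj => ?_
  have hjl : j ≤ l := Nat.lt_succ_iff.mp (Finset.mem_range.mp hj)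
  have hsm : ((-1 : ℤ) ^ (l - j) * (l.choose j : ℤ)) • f (0 + j • (1:ℚ))
      = (-1:ℚ)^(l-j) * (l.choose j : ℚ) * f j := by
    push_cast [zsmul_eq_mul]
    norm_num
  rw [hsm]
  have h1 : (-1:ℚ)^(l-j) * (-1:ℚ)^j = (-1:ℚ)^l := by
    rw [← pow_add, Nat.sub_add_cancel hjl]
  have h2 : (-1:ℚ)^(l-j) * (-1:ℚ)^(l-j) = 1 := by
    rw [← pow_add, ← two_mul, pow_mul]
    norm_num
  have h3 : (-1:ℚ)^l * (-1:ℚ)^(l-j) = (-1:ℚ)^j := by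
    linear_combination (-((-1:ℚ)^(l-j))) * h1 + ((-1:ℚ)^j) * h2
  linear_combination (-((l.choose j : ℚ) * f j)) * h3

lemma aux_descP_neg2 : ∀ l : ℕ, (descPochhammer ℚ l).eval (-2)
    = (-1)^l * (Nat.factorial (l+1) : ℚ) := by
  intro l
  induction l with
  | zero => simp
  | succ l ih =>
    rw [descPochhammer_succ_eval, ih]
    push_cast [Nat.factorial_succ]
    ring

lemma aux_prodfact (k : ℕ) : ∀ l : ℕ,
    (∏ i ∈ range (l+1), ((k:ℚ) + 2 + i)) * (Nat.factorial (k+1) : ℚ)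
      = (Nat.factorial (k+l+2) : ℚ) := by
  intro l
  induction l with
  | zero =>
    rw [Finset.prod_range_one, show k+0+2 = (k+1)+1 by ring]
    push_cast [Nat.factorial_succ]
    ring
  | succ l ih =>
    rw [Finset.prod_range_succ, mul_right_comm, ih]
    have : k + (l+1) + 2 = (k+l+2)+1 := by ring
    rw [this]
    push_cast [Nat.factorial_succ]
    ring

theorem stmt_4 (k l : ℕ) :
    ∑ n ∈ Finset.range (k+l+1),
      (-1)^n / ((n : ℚ) + 2) * (n.choose l) * (if k ≤ n then (l.choose (n - k) : ℚ) else 0)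
    = (-1)^(k+l) / (((k+l+2).choose (l+1) : ℚ)) := by
  -- Step 1: reindex the sum as n = k + i, i ∈ range (l+1)
  have hkl : k ≤ k + l + 1 := by omega
  rw [Finset.range_eq_Ico, ← Finset.sum_Ico_consecutive _ (Nat.zero_le k) hkl]
  have h0 : ∑ n ∈ Finset.Ico 0 k,
      (-1:ℚ)^n / ((n : ℚ) + 2) * (n.choose l) * (if k ≤ n then (l.choose (n - k) : ℚ) else 0)
      = 0 := by
    apply Finset.sum_eq_zero
    intro n hn
    rw [if_neg (not_le.mpr (Finset.mem_Ico.mp hn).2), mul_zero]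
  rw [h0, zero_add, Finset.sum_Ico_eq_sum_range,
    show k + l + 1 - k = l + 1 by omega]
  -- Step 2: polynomial setup
  set D := descPochhammer ℚ l with hD
  set F := D.comp (X + C (k:ℚ)) - C ((-1)^l * ((Nat.factorial (l+1)) : ℚ)) with hF
  have hFroot : F.eval (-(k:ℚ)-2) = 0 := by
    rw [hF, eval_sub, eval_comp, eval_add, eval_X, eval_C,
      show (-(k:ℚ)-2) + k = -2 by ring, aux_descP_neg2 l, eval_C, sub_self]
  obtain ⟨q, hq⟩ := dvd_iff_isRoot.mpr hFroot
  have hFdeg : F.degree ≤ (l : WithBot ℕ) := by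
    rw [hF]
    refine le_trans (degree_sub_le _ _) (max_le ?_ ?_)
    · refine le_trans (degree_le_natDegree) ?_
      rw [natDegree_comp, natDegree_X_add_C, mul_one, hD, descPochhammer_natDegree]
    · exact le_trans degree_C_le (by exact_mod_cast Nat.zero_le l)
  have hqdeg : q.degree < (l : WithBot ℕ) := by
    by_cases h0 : q = 0
    · rw [h0, degree_zero]; exact WithBot.bot_lt_coe l
    · have hd : F.degree = 1 + q.degree := by rw [hq, degree_mul, degree_X_sub_C]
      rw [hd, degree_eq_natDegree h0] at hFdeg
      rw [degree_eq_natDegree h0]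
      have h1 : 1 + q.natDegree ≤ l := by exact_mod_cast hFdeg
      exact_mod_cast by omega
  -- per-term partial fraction
  have hden : ∀ i : ℕ, ((k:ℚ) + i + 2) ≠ 0 := by
    intro i
    have : (0:ℚ) ≤ (k:ℚ) + i := by positivity
    intro h; linarith
  have hfact : (Nat.factorial l : ℚ) ≠ 0 := by
    exact_mod_cast (Nat.factorial_pos l).ne'
  have hchoose : ∀ i : ℕ, ((k+i).choose l : ℚ) / ((k:ℚ) + i + 2)
      = q.eval (i:ℚ) / (Nat.factorial l : ℚ) + (-1)^l * ((l:ℚ)+1) / ((k:ℚ)+i+2) := by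
    intro i
    have hFi : F.eval (i:ℚ) = ((i:ℚ) + ((k:ℚ) + 2)) * q.eval (i:ℚ) := by
      rw [hq, eval_mul, eval_sub, eval_X, eval_C]; ring
    rw [hF, eval_sub, eval_comp, eval_add, eval_X, eval_C, eval_C] at hFi
    have hDi : D.eval ((i:ℚ) + k) = (Nat.factorial l : ℚ) * ((k+i).choose l) := by
      have h1 : D.eval (((k+i : ℕ)):ℚ) = ((k+i).descFactorial l : ℚ) := by
        rw [hD, descPochhammer_eval_eq_descFactorial]
      rw [show ((i:ℚ) + k) = (((k+i : ℕ)):ℚ) by push_cast; ring, h1,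
        Nat.descFactorial_eq_factorial_mul_choose]
      push_cast; ring
    rw [hDi] at hFi
    have hlf : ((Nat.factorial (l+1)) : ℚ) = ((l:ℚ)+1) * (Nat.factorial l : ℚ) := by
      push_cast [Nat.factorial_succ]; ring
    rw [hlf] at hFi
    field_simp
    linear_combination hFi
  -- Step 3: rewrite each term and split the sum
  have hterm : ∀ i ∈ range (l+1),
      (-1:ℚ)^(k+i) / (((k+i : ℕ) : ℚ) + 2) * ((k+i).choose l : ℚ)
          * (if k ≤ k+i then (l.choose (k+i-k) : ℚ) else 0)
      = (-1:ℚ)^k * ((-1:ℚ)^i * (l.choose i : ℚ) * (fun t : ℚ => q.eval t / (Nat.factorial l : ℚ)) i)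
        + ((-1:ℚ)^k * ((-1)^l * ((l:ℚ)+1)))
          * ((-1:ℚ)^i * (l.choose i : ℚ) * (fun t : ℚ => 1 / (((k:ℚ)+2) + t)) i) := by
    intro i _
    rw [if_pos (Nat.le_add_right k i), Nat.add_sub_cancel_left]
    have hc := hchoose i
    have harg : (((k+i : ℕ)):ℚ) + 2 = (k:ℚ) + i + 2 := by push_cast; ring
    rw [harg]
    simp only [pow_add]
    linear_combination ((-1:ℚ)^k * (-1)^i * (l.choose i : ℚ)) * hc
  rw [Finset.sum_congr rfl hterm]
  rw [Finset.sum_add_distrib, ← Finset.mul_sum, ← Finset.mul_sum]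
  rw [aux_sum_alt l (fun t : ℚ => q.eval t / (Nat.factorial l : ℚ)),
      aux_sum_alt l (fun t : ℚ => 1 / (((k:ℚ)+2) + t))]
  -- first piece vanishes
  have hzero : (fwdDiff 1)^[l] (fun t : ℚ => q.eval t / (Nat.factorial l : ℚ)) 0 = 0 := by
    have : (fun t : ℚ => q.eval t / (Nat.factorial l : ℚ))
        = fun t : ℚ => (C (Nat.factorial l : ℚ)⁻¹ * q).eval t := by
      funext t; rw [eval_mul, eval_C]; field_simp
    rw [this]
    refine aux_fwdDiff_poly l _ ?_ 0
    rw [degree_C_mul (inv_ne_zero hfact)]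
    exact hqdeg
  -- second piece via aux_fwdDiff_inv
  have hpos : (0:ℚ) < ((k:ℚ)+2) + 0 := by positivity
  rw [hzero, aux_fwdDiff_inv l ((k:ℚ)+2) 0 hpos]
  -- Step 4: final arithmetic
  have hprod := aux_prodfact k l
  have hprodne : (∏ i ∈ range (l+1), ((k:ℚ) + 2 + i)) ≠ 0 := by
    apply ne_of_gt
    apply Finset.prod_pos
    intro i _
    have : (0:ℚ) ≤ i := by positivity
    linarith
  have hcast : ((k+l+2).choose (l+1) : ℚ)
      = (Nat.factorial (k+l+2) : ℚ) / ((Nat.factorial (l+1) : ℚ) * (Nat.factorial (k+1) : ℚ)) := by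
    rw [Nat.cast_choose ℚ (by omega : l+1 ≤ k+l+2), show k+l+2-(l+1) = k+1 by omega]
  rw [hcast]
  have hfs : ∀ m : ℕ, (Nat.factorial m : ℚ) ≠ 0 := fun m => by
    exact_mod_cast (Nat.factorial_pos m).ne'
  have hsq : (-1:ℚ)^l * (-1:ℚ)^l = 1 := by
    rw [← pow_add, ← two_mul, pow_mul]; norm_num
  have harith : ((l:ℚ)+1) * (Nat.factorial l : ℚ) / ∏ i ∈ range (l+1), ((k:ℚ)+2+i)
      = ((Nat.factorial (l+1) : ℚ) * (Nat.factorial (k+1) : ℚ)) / (Nat.factorial (k+l+2) : ℚ) := by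
    rw [div_eq_div_iff hprodne (hfs _), Nat.factorial_succ l]
    push_cast
    linear_combination (-(((l:ℚ)+1) * (Nat.factorial l : ℚ))) * hprod
  rw [div_div_eq_mul_div, pow_add]
  simp only [add_zero]
  linear_combination
    ((-1:ℚ)^k * (-1:ℚ)^l * (((l:ℚ)+1) * (Nat.factorial l : ℚ)
      / ∏ i ∈ range (l+1), ((k:ℚ)+2+i))) * hsq
    + ((-1:ℚ)^k * (-1:ℚ)^l) * harith
end

section
/- For any nonnegative integers k and l, the sum over n from 0 to k+l of (-1)^n/(n+1) * C(n,l)*C(l,n-k) equals (-1)^(k+l) / ((k+l+1)*C(k+l,l)). -/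
open Finset

lemma aux_beta_sum (d : ℕ) : ∀ a : ℕ, ∑ m ∈ range (d+1), (-1:ℚ)^m * (d.choose m) / (a+m+1)
    = (a.factorial * d.factorial : ℚ) / (a+d+1).factorial := by
  induction d with
  | zero =>
    intro a
    have h : (a.factorial : ℚ) ≠ 0 := by exact_mod_cast a.factorial_ne_zero
    have h2 : (a:ℚ) + 1 ≠ 0 := by positivity
    simp [Nat.factorial_succ]
    field_simp
  | succ d ih =>
    intro a
    have h1 : ∑ m ∈ range (d+2), (-1:ℚ)^m * ((d+1).choose m) / (a+m+1)
        = ∑ m ∈ range (d+2), (-1:ℚ)^m * (d.choose m) / (a+m+1)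
          + ∑ m ∈ range (d+2), (-1:ℚ)^m * (if m = 0 then 0 else (d.choose (m-1) : ℚ)) / (a+m+1) := by
      rw [← Finset.sum_add_distrib]
      refine Finset.sum_congr rfl fun m hm => ?_
      rcases m with _ | m
      · simp
      · simp only [Nat.choose_succ_succ, Nat.succ_ne_zero, if_false, Nat.succ_sub_one]
        push_cast
        ring
    have h2 : ∑ m ∈ range (d+2), (-1:ℚ)^m * (d.choose m) / (a+m+1)
        = ∑ m ∈ range (d+1), (-1:ℚ)^m * (d.choose m) / (a+m+1) := by
      rw [Finset.sum_range_succ, Nat.choose_succ_self]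
      simp
    have h3 : ∑ m ∈ range (d+2), (-1:ℚ)^m * (if m = 0 then 0 else (d.choose (m-1) : ℚ)) / (a+m+1)
        = - ∑ m ∈ range (d+1), (-1:ℚ)^m * (d.choose m) / ((a+1:ℕ)+m+1) := by
      rw [Finset.sum_range_succ', ← Finset.sum_neg_distrib]
      simp only [Nat.succ_ne_zero, if_false, Nat.add_sub_cancel, if_true, mul_zero, zero_div,
        add_zero]
      refine Finset.sum_congr rfl fun m hm => ?_
      push_cast
      ring
    rw [h1, h2, h3, ih a, ih (a+1)]
    have e1 : a + 1 + d + 1 = a + d + 1 + 1 := by omega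
    have e2 : a + (d+1) + 1 = a + d + 1 + 1 := by omega
    rw [e1, e2, Nat.factorial_succ (a+d+1), Nat.factorial_succ a, Nat.factorial_succ d]
    have hf1 : ((a+d+1).factorial : ℚ) ≠ 0 := by exact_mod_cast Nat.factorial_ne_zero _
    have hf2 : ((a+d+1+1 : ℕ) : ℚ) ≠ 0 := by positivity
    push_cast
    field_simp
    ring

lemma aux_findiff (l : ℕ) : ∀ k : ℕ, ∑ i ∈ range (l+1), (-1:ℚ)^i * (l.choose i) * ((k+i).choose l)
    = (-1:ℚ)^l := by
  induction l with
  | zero => intro k; simp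
  | succ l ih =>
    intro k
    have hA : ∑ i ∈ range (l+2), (-1:ℚ)^i * ((l+1).choose i) * ((k+i).choose (l+1))
        = ∑ i ∈ range (l+1), (-1:ℚ)^i * (l.choose i) * ((k+i).choose (l+1))
          - ∑ i ∈ range (l+1), (-1:ℚ)^i * (l.choose i) * ((k+1+i).choose (l+1)) := by
      have hA1 : ∑ i ∈ range (l+2), (-1:ℚ)^i * ((l+1).choose i) * ((k+i).choose (l+1))
          = ∑ i ∈ range (l+2), (-1:ℚ)^i * (l.choose i) * ((k+i).choose (l+1))
            + ∑ i ∈ range (l+2), (-1:ℚ)^i * (if i = 0 then 0 else (l.choose (i-1):ℚ)) * ((k+i).choose (l+1)) := by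
        rw [← Finset.sum_add_distrib]
        refine Finset.sum_congr rfl fun i hi => ?_
        rcases i with _ | i
        · simp
        · simp only [Nat.choose_succ_succ l, Nat.succ_ne_zero, if_false, Nat.add_sub_cancel]
          push_cast
          ring
      have hA2 : ∑ i ∈ range (l+2), (-1:ℚ)^i * (l.choose i) * ((k+i).choose (l+1))
          = ∑ i ∈ range (l+1), (-1:ℚ)^i * (l.choose i) * ((k+i).choose (l+1)) := by
        rw [Finset.sum_range_succ, Nat.choose_succ_self]
        simp
      have hA3 : ∑ i ∈ range (l+2), (-1:ℚ)^i * (if i = 0 then 0 else (l.choose (i-1):ℚ)) * ((k+i).choose (l+1))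
          = - ∑ i ∈ range (l+1), (-1:ℚ)^i * (l.choose i) * ((k+1+i).choose (l+1)) := by
        rw [Finset.sum_range_succ', ← Finset.sum_neg_distrib]
        simp only [Nat.succ_ne_zero, if_false, Nat.add_sub_cancel, if_true, mul_zero, zero_mul,
          add_zero]
        refine Finset.sum_congr rfl fun i hi => ?_
        rw [show k + (i+1) = k + 1 + i by omega]
        ring
      rw [hA1, hA2, hA3]
      ring
    rw [hA]
    have key : ∑ i ∈ range (l+1), (-1:ℚ)^i * (l.choose i) * ((k+i).choose (l+1))
          - ∑ i ∈ range (l+1), (-1:ℚ)^i * (l.choose i) * ((k+1+i).choose (l+1))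
        = - ∑ i ∈ range (l+1), (-1:ℚ)^i * (l.choose i) * ((k+i).choose l) := by
      rw [← Finset.sum_sub_distrib, ← Finset.sum_neg_distrib]
      refine Finset.sum_congr rfl fun i hi => ?_
      have hp : (k+1+i).choose (l+1) = (k+i).choose (l+1) + (k+i).choose l := by
        rw [show k+1+i = (k+i)+1 by omega, Nat.choose_succ_succ' (k+i) l]
        omega
      rw [hp]
      push_cast
      ring
    rw [key, ih k]
    ring

lemma aux_term_eq (k l i : ℕ) (hi : i ≤ l) :
    k.choose (l-i) * (k+i).factorial * (l-i).factorial
      = (k+i).choose l * k.factorial * l.factorial := by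
  rcases le_or_gt l (k+i) with h | h
  · have h1 : l - i ≤ k := by omega
    apply Nat.eq_of_mul_eq_mul_right (Nat.factorial_pos (k+i-l))
    have e1 := Nat.choose_mul_factorial_mul_factorial h1
    have e2 := Nat.choose_mul_factorial_mul_factorial h
    have e3 : k - (l-i) = k+i-l := by omega
    rw [e3] at e1
    calc k.choose (l-i) * (k+i).factorial * (l-i).factorial * (k+i-l).factorial
        = (k.choose (l-i) * (l-i).factorial * (k+i-l).factorial) * (k+i).factorial := by ring
      _ = k.factorial * (k+i).factorial := by rw [e1]
      _ = ((k+i).choose l * l.factorial * (k+i-l).factorial) * k.factorial := by rw [e2]; ring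
      _ = (k+i).choose l * k.factorial * l.factorial * (k+i-l).factorial := by ring
  · rw [Nat.choose_eq_zero_of_lt h, Nat.choose_eq_zero_of_lt (by omega : k < l - i)]
    simp

lemma aux_inner_sum (k l i : ℕ) (hi : i ≤ l) :
    ∑ j ∈ range (l+1), (-1:ℚ)^(k+j) / ((k:ℚ)+j+1) * (j.choose i) * (l.choose j)
    = (-1:ℚ)^(k+i) * (l.choose i) *
        (((k+i).factorial : ℚ) * ((l-i).factorial)) / ((k+l+1).factorial) := by
  have eq1 : ∑ j ∈ range (l+1), (-1:ℚ)^(k+j) / ((k:ℚ)+j+1) * (j.choose i) * (l.choose j)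
      = ∑ j ∈ range (l+1), (if i ≤ j then
          (-1:ℚ)^(k+j) / ((k:ℚ)+j+1) * ((l.choose i : ℚ) * ((l-i).choose (j-i))) else 0) := by
    refine Finset.sum_congr rfl fun j hj => ?_
    simp only [Finset.mem_range] at hj
    rcases le_or_gt i j with h | h
    · rw [if_pos h]
      have := Nat.choose_mul (n := l) h
      have hc : ((l.choose j : ℚ)) * (j.choose i) = (l.choose i : ℚ) * ((l-i).choose (j-i)) := by
        exact_mod_cast congrArg (Nat.cast : ℕ → ℚ) this
      calc (-1:ℚ)^(k+j) / ((k:ℚ)+j+1) * (j.choose i) * (l.choose j)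
          = (-1:ℚ)^(k+j) / ((k:ℚ)+j+1) * ((l.choose j : ℚ) * (j.choose i)) := by ring
        _ = _ := by rw [hc]
    · rw [if_neg (by omega), Nat.choose_eq_zero_of_lt h]
      simp
  rw [eq1]
  have sub : Ico i (l+1) ⊆ range (l+1) := by
    rw [Finset.range_eq_Ico]; exact Finset.Ico_subset_Ico (Nat.zero_le i) le_rfl
  rw [← Finset.sum_subset sub (by
    intro x hx hx2
    simp only [Finset.mem_range] at hx
    simp only [Finset.mem_Ico] at hx2
    rw [if_neg (by omega)])]
  rw [show l + 1 = i + ((l-i)+1) by omega, Finset.sum_Ico_eq_sum_range,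
    show i + ((l-i)+1) - i = (l-i)+1 by omega]
  have eq2 : ∑ m ∈ range ((l-i)+1), (if i ≤ i + m then
        (-1:ℚ)^(k+(i+m)) / ((k:ℚ)+(↑(i+m):ℚ)+1) * ((l.choose i : ℚ) * ((l-i).choose (i+m-i))) else 0)
      = ((-1:ℚ)^(k+i) * (l.choose i)) *
          ∑ m ∈ range ((l-i)+1), (-1:ℚ)^m * (((l-i).choose m : ℚ)) / (((k+i:ℕ):ℚ) + m + 1) := by
    rw [Finset.mul_sum]
    refine Finset.sum_congr rfl fun m hm => ?_
    rw [if_pos (by omega), Nat.add_sub_cancel_left, pow_add, pow_add]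
    push_cast
    ring
  rw [eq2, aux_beta_sum (l-i) (k+i), show (k+i) + (l-i) + 1 = k + l + 1 by omega]
  ring

theorem stmt_5 (k l : ℕ) :
    ∑ n ∈ Finset.range (k+l+1),
      (-1)^n / ((n : ℚ) + 1) * (n.choose l) * (if k ≤ n then (l.choose (n - k) : ℚ) else 0)
    = (-1)^(k+l) / (((k : ℚ) + l + 1) * ((k+l).choose l)) := by
  -- Step 1: restrict to n = k + j
  have step1 : ∑ n ∈ Finset.range (k+l+1),
      (-1)^n / ((n : ℚ) + 1) * (n.choose l) * (if k ≤ n then (l.choose (n - k) : ℚ) else 0)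
      = ∑ j ∈ range (l+1), (-1:ℚ)^(k+j) / ((k:ℚ)+j+1) * ((k+j).choose l) * (l.choose j) := by
    have sub : Ico k (k+l+1) ⊆ range (k+l+1) := by
      rw [Finset.range_eq_Ico]; exact Finset.Ico_subset_Ico (Nat.zero_le k) le_rfl
    rw [← Finset.sum_subset sub (by
      intro x hx hx2
      simp only [Finset.mem_range] at hx
      simp only [Finset.mem_Ico] at hx2
      rw [if_neg (by omega)]
      ring)]
    rw [show k + l + 1 = k + (l+1) by omega, Finset.sum_Ico_eq_sum_range,
      show k + (l+1) - k = l+1 by omega]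
    refine Finset.sum_congr rfl fun j hj => ?_
    rw [if_pos (by omega), Nat.add_sub_cancel_left]
    push_cast
    ring
  rw [step1]
  -- Step 2: Vandermonde (reflected)
  have step2 : ∀ j, (((k+j).choose l : ℚ))
      = ∑ i ∈ range (l+1), ((k.choose (l-i) : ℚ) * (j.choose i)) := by
    intro j
    rw [Nat.add_choose_eq, Finset.Nat.sum_antidiagonal_eq_sum_range_succ_mk,
      ← Finset.sum_range_reflect]
    push_cast
    refine Finset.sum_congr rfl fun i hi => ?_
    simp only [Finset.mem_range] at hi
    rw [show l - (l-i) = i by omega]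
  have step2' : ∑ j ∈ range (l+1), (-1:ℚ)^(k+j) / ((k:ℚ)+j+1) * ((k+j).choose l) * (l.choose j)
      = ∑ i ∈ range (l+1), (k.choose (l-i) : ℚ) *
          ∑ j ∈ range (l+1), (-1:ℚ)^(k+j) / ((k:ℚ)+j+1) * (j.choose i) * (l.choose j) := by
    have expand : ∑ j ∈ range (l+1), (-1:ℚ)^(k+j) / ((k:ℚ)+j+1) * ((k+j).choose l) * (l.choose j)
        = ∑ j ∈ range (l+1), ∑ i ∈ range (l+1),
            (k.choose (l-i) : ℚ) * ((-1:ℚ)^(k+j) / ((k:ℚ)+j+1) * (j.choose i) * (l.choose j)) := by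
      refine Finset.sum_congr rfl fun j hj => ?_
      rw [step2 j, Finset.mul_sum, Finset.sum_mul]
      refine Finset.sum_congr rfl fun i hi => ?_
      ring
    rw [expand, Finset.sum_comm]
    refine Finset.sum_congr rfl fun i hi => ?_
    rw [Finset.mul_sum]
  rw [step2']
  -- Step 3: evaluate inner sums
  have step3 : ∑ i ∈ range (l+1), (k.choose (l-i) : ℚ) *
          ∑ j ∈ range (l+1), (-1:ℚ)^(k+j) / ((k:ℚ)+j+1) * (j.choose i) * (l.choose j)
      = ∑ i ∈ range (l+1), (-1:ℚ)^(k) *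
          ((-1:ℚ)^i * (l.choose i) * ((k+i).choose l)) *
          ((k.factorial : ℚ) * (l.factorial)) / ((k+l+1).factorial) := by
    refine Finset.sum_congr rfl fun i hi => ?_
    simp only [Finset.mem_range] at hi
    have hi' : i ≤ l := by omega
    rw [aux_inner_sum k l i hi']
    have ht : ((k.choose (l-i) : ℚ)) * (((k+i).factorial : ℚ) * ((l-i).factorial))
        = ((k+i).choose l : ℚ) * ((k.factorial : ℚ) * (l.factorial)) := by
      have := aux_term_eq k l i hi'
      have := congrArg (Nat.cast : ℕ → ℚ) this
      push_cast at this
      linarith [this]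
    rw [pow_add]
    field_simp
    linear_combination (l.choose i : ℚ) * ht
  rw [step3]
  -- Step 4: apply the finite difference identity
  have step4 : ∑ i ∈ range (l+1), (-1:ℚ)^(k) *
          ((-1:ℚ)^i * (l.choose i) * ((k+i).choose l)) *
          ((k.factorial : ℚ) * (l.factorial)) / ((k+l+1).factorial)
      = (-1:ℚ)^k * (-1:ℚ)^l * ((k.factorial : ℚ) * (l.factorial)) / ((k+l+1).factorial) := by
    rw [← Finset.sum_div, ← Finset.sum_mul, ← Finset.mul_sum, aux_findiff l k]
  rw [step4]
  -- Final algebra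
  have hfact : ((k+l).choose l : ℚ) * (l.factorial) * (k.factorial) = ((k+l).factorial : ℚ) := by
    exact_mod_cast congrArg (Nat.cast : ℕ → ℚ)
      (by rw [← Nat.choose_mul_factorial_mul_factorial (show l ≤ k+l by omega),
              Nat.add_sub_cancel])
  have h1 : ((k+l+1).factorial : ℚ) = ((k:ℚ)+l+1) * ((k+l).factorial) := by
    rw [Nat.factorial_succ]
    push_cast
    ring
  have hk : (k.factorial : ℚ) ≠ 0 := by exact_mod_cast k.factorial_ne_zero
  have hl : (l.factorial : ℚ) ≠ 0 := by exact_mod_cast l.factorial_ne_zero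
  have hkl : ((k+l).factorial : ℚ) ≠ 0 := by exact_mod_cast (k+l).factorial_ne_zero
  have hkl1 : ((k:ℚ)+l+1) ≠ 0 := by positivity
  have hch : ((k+l).choose l : ℚ) ≠ 0 := by
    have : 0 < (k+l).choose l := Nat.choose_pos (by omega)
    exact_mod_cast this.ne'
  rw [pow_add, h1]
  field_simp
  linear_combination hfact
end

section
/- For any nonnegative integers k, l and real x not equal to 0,-1,-2,...,-(k+l), the sum over n from 0 to k+l of (-1)^(k+l+n)/(x+n) * C(n,l)*C(l,n-k) equals (x)_l * (x)_k / (x)_{k+l+1}. -/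
open Finset

noncomputable def Saux (k l : ℕ) (x : ℝ) : ℝ :=
  ∑ j ∈ Finset.range (l+1), (-1 : ℝ)^(l+j) * ((k+j).choose l : ℝ) * ((l.choose j : ℕ) : ℝ) / (x + k + j)

noncomputable def Raux (k l : ℕ) (x : ℝ) : ℝ :=
  (∏ i ∈ Finset.range l, (x + i)) / (∏ j ∈ Finset.range (l+1), (x + k + j))

lemma baseL (k : ℕ) (x : ℝ) : Saux k 0 x = Raux k 0 x := by
  simp [Saux, Raux]

lemma baseK (l : ℕ) (x : ℝ) (hx : ∀ n : ℕ, n ≤ l → x + n ≠ 0) : Saux 0 l x = Raux 0 l x := by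
  have hnum : (∏ i ∈ Finset.range l, (x + i)) ≠ 0 := by
    apply Finset.prod_ne_zero_iff.2
    intro i hi
    exact hx i (le_of_lt (by simpa using hi))
  have hS : Saux 0 l x = 1 / (x + l) := by
    unfold Saux
    rw [Finset.sum_eq_single_of_mem l (by simp)]
    · simp
    · intro j hj hjl
      have : j < l := lt_of_le_of_ne (by simpa [Nat.lt_succ_iff] using hj) hjl
      simp [Nat.choose_eq_zero_of_lt this]
  have hR : Raux 0 l x = 1 / (x + l) := by
    unfold Raux
    simp only [Nat.cast_zero, add_zero]
    rw [Finset.prod_range_succ]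
    rw [div_mul_eq_div_div_swap, div_right_comm, div_self hnum, one_div]
  rw [hS, hR]

lemma Srec (k l : ℕ) (x : ℝ) :
    Saux (k+1) (l+1) x = Saux k (l+1) (x+1) - Saux k l (x+1) + Saux (k+1) l (x+1) := by
  have key : Saux (k+1) (l+1) x - Saux k (l+1) (x+1)
      = ∑ j ∈ Finset.range (l+2), (-1 : ℝ)^(l+1+j) * ((k+j).choose l : ℝ) * (((l+1).choose j : ℕ) : ℝ) / (x + 1 + k + j) := by
    unfold Saux
    rw [← Finset.sum_sub_distrib]
    apply Finset.sum_congr rfl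
    intro j hj
    have hc : (k+1+j).choose (l+1) = (k+j).choose (l+1) + (k+j).choose l := by
      rw [show k+1+j = (k+j)+1 by ring, Nat.choose_succ_succ']; omega
    push_cast [hc]
    ring
  have key2 : ∑ j ∈ Finset.range (l+2), (-1 : ℝ)^(l+1+j) * ((k+j).choose l : ℝ) * (((l+1).choose j : ℕ) : ℝ) / (x + 1 + k + j)
      = Saux (k+1) l (x+1) - Saux k l (x+1) := by
    rw [Finset.sum_range_succ']
    have hsplit : ∀ m ∈ Finset.range (l+1),
        (-1 : ℝ)^(l+1+(m+1)) * ((k+(m+1)).choose l : ℝ) * (((l+1).choose (m+1) : ℕ) : ℝ) / (x + 1 + k + (m+1 : ℕ))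
        = (-1 : ℝ)^(l+m) * (((k+1)+m).choose l : ℝ) * ((l.choose m : ℕ) : ℝ) / ((x+1) + (k+1 : ℕ) + m)
          + (-1 : ℝ)^(l+m) * ((k+(m+1)).choose l : ℝ) * ((l.choose (m+1) : ℕ) : ℝ) / (x + 1 + k + (m+1 : ℕ)) := by
      intro m hm
      have hc : (l+1).choose (m+1) = l.choose m + l.choose (m+1) := Nat.choose_succ_succ l m
      have hs : (-1 : ℝ)^(l+1+(m+1)) = (-1 : ℝ)^(l+m) := by
        rw [show l+1+(m+1) = (l+m)+2 by ring, pow_add]; norm_num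
      rw [hs]
      push_cast [hc]
      rw [show k+(m+1) = (k+1)+m by ring]
      push_cast
      ring
    rw [Finset.sum_congr rfl hsplit, Finset.sum_add_distrib]
    have h1 : ∑ m ∈ Finset.range (l+1),
        (-1 : ℝ)^(l+m) * (((k+1)+m).choose l : ℝ) * ((l.choose m : ℕ) : ℝ) / ((x+1) + (k+1 : ℕ) + m)
        = Saux (k+1) l (x+1) := rfl
    rw [h1]
    have h2 : Saux k l (x+1) = (∑ m ∈ Finset.range l,
        (-1 : ℝ)^(l+(m+1)) * ((k+(m+1)).choose l : ℝ) * ((l.choose (m+1) : ℕ) : ℝ) / ((x+1) + k + (m+1 : ℕ)))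
        + (-1 : ℝ)^(l+0) * ((k+0).choose l : ℝ) * ((l.choose 0 : ℕ) : ℝ) / ((x+1) + k + (0 : ℕ)) := by
      unfold Saux
      rw [Finset.sum_range_succ']
    rw [h2]
    rw [Finset.sum_range_succ]
    simp only [Nat.choose_succ_self, Nat.cast_zero, Nat.cast_ofNat, Nat.choose_zero_right,
      Nat.cast_one, Nat.add_zero, add_zero, mul_zero, zero_div, mul_one]
    have h3 : ∑ m ∈ Finset.range l,
        (-1 : ℝ)^(l+(m+1)) * ((k+(m+1)).choose l : ℝ) * ((l.choose (m+1) : ℕ) : ℝ) / (x + 1 + k + ((m+1 : ℕ) : ℝ))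
        = -∑ m ∈ Finset.range l,
        (-1 : ℝ)^(l+m) * ((k+(m+1)).choose l : ℝ) * ((l.choose (m+1) : ℕ) : ℝ) / (x + 1 + k + ((m+1 : ℕ) : ℝ)) := by
      rw [← Finset.sum_neg_distrib]
      apply Finset.sum_congr rfl
      intro m hm
      rw [show l+(m+1) = (l+m)+1 by ring, pow_succ]
      ring
    rw [h3]
    rw [show (-1 : ℝ)^(l+1) = -(-1 : ℝ)^l by rw [pow_succ]; ring]
    ring
  rw [sub_eq_iff_eq_add] at key
  rw [key, key2]
  ring

lemma Rrec (k l : ℕ) (x : ℝ) (hx : ∀ n : ℕ, n ≤ (k+1) + (l+1) → x + n ≠ 0) :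
    Raux (k+1) (l+1) x = Raux k (l+1) (x+1) - Raux k l (x+1) + Raux (k+1) l (x+1) := by
  unfold Raux
  set A : ℝ := ∏ i ∈ Finset.range l, (x + 1 + i) with hA
  set E : ℝ := ∏ j ∈ Finset.range l, (x + (k:ℝ) + 2 + j) with hE
  have hE0 : E ≠ 0 := by
    rw [hE]
    apply Finset.prod_ne_zero_iff.2
    intro j hj
    have := hx (k+2+j) (by simp at hj; omega)
    push_cast at this ⊢
    intro h; apply this; linarith
  have hd1 : x + (k:ℝ) + 1 ≠ 0 := by
    have := hx (k+1) (by omega); push_cast at this ⊢; intro h; apply this; linarith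
  have hd2 : x + (k:ℝ) + (l:ℝ) + 2 ≠ 0 := by
    have := hx (k+l+2) (by omega); push_cast at this ⊢; intro h; apply this; linarith
  have e1 : ∏ i ∈ Finset.range (l+1), (x + (i:ℝ)) = x * A := by
    rw [Finset.prod_range_succ']
    rw [hA]
    simp only [Nat.cast_zero, add_zero]
    rw [mul_comm]
    congr 1
    apply Finset.prod_congr rfl
    intro i _
    push_cast; ring
  have e2 : ∏ i ∈ Finset.range (l+1), (x + 1 + (i:ℝ)) = A * (x + 1 + l) := by
    rw [Finset.prod_range_succ]
  have shift : ∀ j ∈ Finset.range (l+1), (x + 1 + (k:ℝ) + ((j+1 : ℕ):ℝ)) = x + (k:ℝ) + 2 + j := by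
    intro j _; push_cast; ring
  have e3 : ∏ j ∈ Finset.range (l+2), (x + 1 + (k:ℝ) + j) = E * (x + k + l + 2) * (x + k + 1) := by
    rw [Finset.prod_range_succ', Finset.prod_congr rfl shift, Finset.prod_range_succ, hE]
    push_cast
    ring
  have e4 : ∏ j ∈ Finset.range (l+2), (x + ((k:ℕ)+1 : ℕ) + (j:ℝ)) = E * (x + k + l + 2) * (x + k + 1) := by
    rw [← e3]
    apply Finset.prod_congr rfl
    intro j _
    push_cast; ring
  have shift2 : ∀ j ∈ Finset.range l, (x + 1 + (k:ℝ) + ((j+1 : ℕ):ℝ)) = x + (k:ℝ) + 2 + j := by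
    intro j _; push_cast; ring
  have e5 : ∏ j ∈ Finset.range (l+1), (x + 1 + (k:ℝ) + j) = E * (x + k + 1) := by
    rw [Finset.prod_range_succ', Finset.prod_congr rfl shift2, hE]
    push_cast
    ring
  have e6 : ∏ j ∈ Finset.range (l+1), (x + 1 + ((k:ℕ)+1 : ℕ) + (j:ℝ)) = E * (x + k + l + 2) := by
    rw [Finset.prod_range_succ]
    have : ∀ j ∈ Finset.range l, (x + 1 + (((k:ℕ)+1 : ℕ) : ℝ) + (j:ℝ)) = x + (k:ℝ) + 2 + j := by
      intro j _; push_cast; ring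
    rw [Finset.prod_congr rfl this, hE]
    push_cast; ring
  push_cast at e1 e2 e3 e4 e5 e6 ⊢
  rw [e1, e2, e4, e3, e5, e6]
  field_simp
  ring

lemma SRmain : ∀ N k l : ℕ, k + l ≤ N → ∀ x : ℝ,
    (∀ n : ℕ, n ≤ k + l → x + n ≠ 0) → Saux k l x = Raux k l x := by
  intro N
  induction N with
  | zero =>
    intro k l h x hx
    obtain ⟨rfl, rfl⟩ : k = 0 ∧ l = 0 := by omega
    exact baseL 0 x
  | succ N ih =>
    intro k l h x hx
    rcases l with _ | l
    · exact baseL k x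
    rcases k with _ | k
    · exact baseK (l+1) x (by simpa using hx)
    have hsh : ∀ n : ℕ, n ≤ k + l + 1 → (x + 1) + (n : ℝ) ≠ 0 := by
      intro n hn
      have := hx (n+1) (by omega)
      push_cast at this ⊢
      intro hh; apply this; linarith
    rw [Srec,
      ih k (l+1) (by omega) (x+1) (by intro n hn; exact hsh n (by omega)),
      ih k l (by omega) (x+1) (by intro n hn; exact hsh n (by omega)),
      ih (k+1) l (by omega) (x+1) (by intro n hn; exact hsh n (by omega)),
      ← Rrec k l x hx]

theorem stmt_6 (k l : ℕ) (x : ℝ) (hx : ∀ n : ℕ, n ≤ k + l → x + n ≠ 0) :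
    ∑ n ∈ Finset.range (k+l+1),
      (-1)^(k+l+n) / (x + n) * (n.choose l) * (if k ≤ n then (l.choose (n - k) : ℝ) else 0)
    = (∏ i ∈ Finset.range l, (x + i)) * (∏ i ∈ Finset.range k, (x + i))
        / (∏ i ∈ Finset.range (k+l+1), (x + i)) := by
  have hL : (∑ n ∈ Finset.range (k+l+1),
      (-1 : ℝ)^(k+l+n) / (x + n) * (n.choose l) * (if k ≤ n then (l.choose (n - k) : ℝ) else 0))
      = Saux k l x := by
    rw [show k+l+1 = k+(l+1) by omega, Finset.sum_range_add]
    have hz : ∀ n ∈ Finset.range k,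
        (-1 : ℝ)^(k+l+n) / (x + n) * (n.choose l) * (if k ≤ n then (l.choose (n - k) : ℝ) else 0) = 0 := by
      intro n hn
      rw [if_neg (by simp at hn; omega)]
      ring
    rw [Finset.sum_congr rfl hz, Finset.sum_const_zero, zero_add]
    unfold Saux
    apply Finset.sum_congr rfl
    intro j hj
    rw [if_pos (by omega), show k + j - k = j by omega]
    have hs : (-1 : ℝ)^(k+l+(k+j)) = (-1 : ℝ)^(l+j) := by
      rw [show k+l+(k+j) = (l+j)+2*k by ring, pow_add, pow_mul]
      norm_num
    rw [hs]
    push_cast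
    ring
  have hPk : (∏ i ∈ Finset.range k, (x + i)) ≠ 0 := by
    apply Finset.prod_ne_zero_iff.2
    intro i hi
    exact hx i (by simp at hi; omega)
  have hR : (∏ i ∈ Finset.range l, (x + i)) * (∏ i ∈ Finset.range k, (x + i))
      / (∏ i ∈ Finset.range (k+l+1), (x + i)) = Raux k l x := by
    have hsplit : (∏ i ∈ Finset.range (k+(l+1)), (x + (i:ℝ)))
        = (∏ i ∈ Finset.range k, (x + i)) * ∏ j ∈ Finset.range (l+1), (x + (k:ℝ) + j) := by
      rw [Finset.prod_range_add]
      congr 1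
      apply Finset.prod_congr rfl
      intro j _
      push_cast; ring
    rw [show k+l+1 = k+(l+1) by omega, hsplit]
    unfold Raux
    rw [mul_comm (∏ i ∈ Finset.range k, (x + (i:ℝ)))]
    rw [mul_div_mul_right _ _ hPk]
  rw [hL, hR]
  exact SRmain (k+l) k l le_rfl x hx
end

section
/- (Pfaff transformation for Legendre-type sums) For any nonnegative integer n and any element z of a commutative ring, the sum over k from 0 to n of C(n,k)*C(n+k,k)*(-z)^k equals (-1)^n times the sum over k from 0 to n of C(n,k)*C(n+k,k)*(z-1)^k. -/
open Finset

lemma findiff (n : ℕ) : ∀ M, M ≤ n → ∀ x : ℕ,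
    ∑ i ∈ range (M+1), (-1:ℤ)^i * (M.choose i) * ((x+i).choose n)
    = (-1)^M * (x.choose (n-M)) := by
  intro M
  induction M with
  | zero => intro _ x; simp
  | succ M ih =>
    intro hM x
    have hM' : M ≤ n := Nat.le_of_succ_le hM
    set S : ℕ → ℤ := fun y => ∑ i ∈ range (M+1), (-1:ℤ)^i * (M.choose i) * ((y+i).choose n)
      with hS
    have hT : ∀ y : ℕ, ∑ i ∈ range (M+2), (-1:ℤ)^i * (M.choose i) * ((y+i).choose n) = S y := by
      intro y
      rw [Finset.sum_range_succ]
      simp [Nat.choose_succ_self, hS]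
    have key : ∑ i ∈ range (M+2), (-1:ℤ)^i * ((M+1).choose i) * ((x+i).choose n)
        = S x - S (x+1) := by
      have e1 : ∀ i ∈ range (M+2), (-1:ℤ)^i * ((M+1).choose i) * ((x+i).choose n)
          = (-1:ℤ)^i * (M.choose i) * ((x+i).choose n)
            + (-1:ℤ)^i * (M.choose (i-1)) * ((x+i).choose n) * (if i = 0 then 0 else 1) := by
        intro i _
        cases i with
        | zero => simp
        | succ j =>
          rw [if_neg (Nat.succ_ne_zero j), Nat.succ_sub_one, Nat.choose_succ_succ']
          push_cast
          ring
      rw [Finset.sum_congr rfl e1, Finset.sum_add_distrib, hT]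
      have e2 : ∑ i ∈ range (M+2), (-1:ℤ)^i * (M.choose (i-1)) * ((x+i).choose n) * (if i = 0 then 0 else 1)
          = - S (x+1) := by
        rw [hS, Finset.sum_range_succ']
        simp only [Nat.succ_sub_one, Nat.succ_ne_zero, if_false, mul_one]
        norm_num
        rw [← Finset.sum_neg_distrib]
        apply Finset.sum_congr rfl
        intro i _
        rw [show x+(i+1) = x+1+i by ring]
        ring
      rw [e2]
      ring
    rw [key]
    simp only [hS]
    rw [ih hM', ih hM']
    have h1 : n - M = (n - (M+1)) + 1 := by omega
    rw [h1, Nat.choose_succ_succ x (n-(M+1))]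
    push_cast
    ring

lemma keyid (n m : ℕ) :
    ∑ k ∈ range (n+1), (-1:ℤ)^k * (n.choose k) * ((n+k).choose k) * (k.choose m)
    = (-1)^n * (n.choose m) * ((n+m).choose m) := by
  by_cases h : n < m
  · rw [Finset.sum_eq_zero, Nat.choose_eq_zero_of_lt h]
    · simp
    · intro k hk
      rw [Nat.choose_eq_zero_of_lt (lt_of_le_of_lt (Nat.lt_succ_iff.mp (mem_range.mp hk)) h)]
      simp
  · push_neg at h
    rw [range_eq_Ico, ← Finset.sum_Ico_consecutive _ (Nat.zero_le m) (by omega : m ≤ n+1)]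
    have hz : ∑ k ∈ Finset.Ico 0 m, (-1:ℤ)^k * (n.choose k) * ((n+k).choose k) * (k.choose m) = 0 := by
      apply Finset.sum_eq_zero
      intro k hk
      rw [Nat.choose_eq_zero_of_lt (Finset.mem_Ico.mp hk).2]
      simp
    rw [hz, zero_add, Finset.sum_Ico_eq_sum_range]
    have hr : n + 1 - m = (n - m) + 1 := by omega
    rw [hr]
    have step : ∀ i ∈ range ((n-m)+1),
        (-1:ℤ)^(m+i) * (n.choose (m+i)) * ((n+(m+i)).choose (m+i)) * ((m+i).choose m)
        = ((-1:ℤ)^m * (n.choose m)) * ((-1:ℤ)^i * ((n-m).choose i) * (((n+m)+i).choose n)) := by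
      intro i hi
      have hile : i ≤ n - m := Nat.lt_succ_iff.mp (mem_range.mp hi)
      have hmn : m + i ≤ n := by omega
      have h2 : n.choose (m+i) * (m+i).choose m = n.choose m * (n-m).choose i := by
        have := Nat.choose_mul (n := n) (Nat.le_add_right m i)
        simpa using this
      have h2' : (n.choose (m+i) : ℤ) * ((m+i).choose m) = (n.choose m : ℤ) * ((n-m).choose i) := by
        exact_mod_cast congrArg (Nat.cast (R := ℤ)) h2
      have h3 : (n+(m+i)).choose (m+i) = (n+m+i).choose n := by
        rw [show n+(m+i) = n+m+i by ring]
        exact Nat.choose_symm_of_eq_add (by ring)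
      rw [h3, pow_add]
      linear_combination ((-1:ℤ)^m * (-1:ℤ)^i * (((n+m+i).choose n : ℤ))) * h2'
    rw [Finset.sum_congr rfl step, ← Finset.mul_sum,
      findiff n (n-m) (Nat.sub_le n m) (n+m)]
    have : n - (n - m) = m := by omega
    rw [this]
    rw [show (-1:ℤ)^m * (n.choose m) * ((-1:ℤ)^(n-m) * ((n+m).choose m))
      = ((-1:ℤ)^m * (-1:ℤ)^(n-m)) * (n.choose m) * ((n+m).choose m) by ring,
      ← pow_add, show m + (n-m) = n by omega]

theorem stmt_7 {R : Type*} [CommRing R] (n : ℕ) (z : R) :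
    ∑ k ∈ Finset.range (n+1), (n.choose k : R) * ((n+k).choose k) * (-z)^k
    = (-1)^n * ∑ k ∈ Finset.range (n+1), (n.choose k : R) * ((n+k).choose k) * (z-1)^k := by
  have cast_key : ∀ m : ℕ, ∑ k ∈ range (n+1),
      ((-1:R)^k * (n.choose k) * ((n+k).choose k) * (k.choose m))
      = (-1)^n * (n.choose m) * ((n+m).choose m) := by
    intro m
    have h := congrArg (fun t : ℤ => (t : R)) (keyid n m)
    push_cast at h
    exact h
  have expand : ∑ k ∈ range (n+1), (n.choose k : R) * ((n+k).choose k) * (z-1)^k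
      = ∑ m ∈ range (n+1), ((-1:R)^n * (n.choose m) * ((n+m).choose m)) * (-z)^m := by
    have e1 : ∀ k ∈ range (n+1), (n.choose k : R) * ((n+k).choose k) * (z-1)^k
        = ∑ m ∈ range (n+1),
          ((-1:R)^k * (n.choose k) * ((n+k).choose k) * (k.choose m)) * (-z)^m := by
      intro k hk
      have hk' : k ≤ n := Nat.lt_succ_iff.mp (mem_range.mp hk)
      have hvan : ∀ m ∈ range (n+1), m ∉ range (k+1) →
          (-z)^m * (1:R)^(k-m) * (k.choose m) = 0 := by
        intro m _ hm
        rw [Nat.choose_eq_zero_of_lt (by simpa using hm)]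
        simp
      have A : ∑ m ∈ range (n+1), (k.choose m : R) * (-z)^m = (1-z)^k := by
        rw [show (1:R)-z = -z+1 by ring, add_pow]
        have hre : ∑ m ∈ range (n+1), (k.choose m : R) * (-z)^m
            = ∑ m ∈ range (n+1), (-z)^m * (1:R)^(k-m) * (k.choose m) :=
          Finset.sum_congr rfl (fun m _ => by rw [one_pow]; ring)
        rw [hre, ← Finset.sum_subset (Finset.range_subset_range.mpr (by omega : k+1 ≤ n+1)) hvan]
      have hp : (z-1)^k = (-1:R)^k * ∑ m ∈ range (n+1), (k.choose m : R) * (-z)^m := by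
        rw [A, show z-1 = (-1:R)*(1-z) by ring, mul_pow]
      rw [hp, Finset.mul_sum, Finset.mul_sum]
      exact Finset.sum_congr rfl (fun m _ => by ring)
    rw [Finset.sum_congr rfl e1, Finset.sum_comm]
    refine Finset.sum_congr rfl (fun m _ => ?_)
    rw [← Finset.sum_mul, cast_key m]
  rw [expand, Finset.mul_sum]
  refine Finset.sum_congr rfl (fun m _ => ?_)
  have hsq : (-1:R)^n * (-1:R)^n = 1 := by
    rw [← pow_add]; exact Even.neg_one_pow ⟨n, rfl⟩
  rw [show (-1:R)^n * ((-1:R)^n * (n.choose m:R) * ((n+m).choose m) * (-z)^m)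
      = ((-1:R)^n * (-1:R)^n) * ((n.choose m:R) * ((n+m).choose m) * (-z)^m) by ring,
    hsq, one_mul]
end

section
/- For any nonnegative integer n and any element z of a commutative ring, the sum over k from 1 to n of C(n,k)*C(n+k,k)*k*(-z)^(k-1) equals (-1)^(n-1) times the sum over k from 1 to n of C(n,k)*C(n+k,k)*k*(z-1)^(k-1). -/
open Finset

lemma aux_diff (f : ℕ → ℤ) (m a : ℕ) :
    ∑ i ∈ range (m+2), (-1:ℤ)^i * (m+1).choose i * f (a+i)
      = (∑ i ∈ range (m+1), (-1:ℤ)^i * m.choose i * f (a+i))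
        - ∑ i ∈ range (m+1), (-1:ℤ)^i * m.choose i * f (a+1+i) := by
  have e1 : ∑ i ∈ range (m+2), (-1:ℤ)^i * (m+1).choose i * f (a+i)
      = f a - (∑ i ∈ range (m+1), (-1:ℤ)^i * m.choose i * f (a+1+i))
        - ∑ i ∈ range m, (-1:ℤ)^i * m.choose (i+1) * f (a+1+i) := by
    rw [Finset.sum_range_succ' (fun i => (-1:ℤ)^i * (m+1).choose i * f (a+i)) (m+1)]
    have expand : ∑ i ∈ range (m+1), (-1:ℤ)^(i+1) * ((m+1).choose (i+1)) * f (a+(i+1))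
        = (∑ i ∈ range (m+1), -((-1:ℤ)^i * m.choose i * f (a+1+i)))
          + ∑ i ∈ range (m+1), -((-1:ℤ)^i * m.choose (i+1) * f (a+1+i)) := by
      rw [← Finset.sum_add_distrib]
      refine Finset.sum_congr rfl fun i _ => ?_
      have h : a + (i+1) = a+1+i := by omega
      rw [h, Nat.choose_succ_succ]
      push_cast
      ring
    rw [expand]
    rw [Finset.sum_range_succ (fun i => -((-1:ℤ)^i * m.choose (i+1) * f (a+1+i))) m]
    rw [Nat.choose_succ_self]
    simp only [Finset.sum_neg_distrib, Nat.cast_zero, Nat.choose_zero_right, pow_zero,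
      Nat.cast_one, add_zero, mul_zero, zero_mul, neg_zero]
    ring
  have e2 : ∑ i ∈ range (m+1), (-1:ℤ)^i * m.choose i * f (a+i)
      = f a - ∑ i ∈ range m, (-1:ℤ)^i * m.choose (i+1) * f (a+1+i) := by
    rw [Finset.sum_range_succ' (fun i => (-1:ℤ)^i * m.choose i * f (a+i)) m]
    have : ∀ i ∈ range m, (-1:ℤ)^(i+1) * (m.choose (i+1)) * f (a+(i+1))
        = -((-1:ℤ)^i * m.choose (i+1) * f (a+1+i)) := by
      intro i _
      have h : a + (i+1) = a+1+i := by omega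
      rw [h]; ring
    rw [Finset.sum_congr rfl this]
    simp only [Finset.sum_neg_distrib, Nat.choose_zero_right, pow_zero, Nat.cast_one, add_zero]
    ring
  rw [e1, e2]
  ring

lemma aux_key1 (m : ℕ) : ∀ a b : ℕ,
    ∑ i ∈ range (m+1), (-1:ℤ)^i * m.choose i * ((a+i).choose (b+m)) = (-1)^m * a.choose b := by
  induction m with
  | zero => intro a b; simp
  | succ m ih =>
    intro a b
    have hb : b + (m+1) = (b+1) + m := by omega
    have := aux_diff (fun x => (x.choose ((b+1)+m) : ℤ)) m a
    simp only [hb]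
    rw [show m+1+1 = m+2 from rfl, this, ih a (b+1), ih (a+1) (b+1), Nat.choose_succ_succ a b]
    push_cast
    ring

lemma aux_key2 (n s : ℕ) (h : s ≤ n) :
    ∑ k ∈ Icc s n, (-1:ℤ)^k * n.choose k * ((n+k).choose k) * k.choose s
      = (-1)^n * n.choose s * ((n+s).choose s) := by
  obtain ⟨m, rfl⟩ : ∃ m, n = s + m := ⟨n - s, by omega⟩
  rw [← Finset.Ico_add_one_right_eq_Icc, Finset.sum_Ico_eq_sum_range]
  simp only [show s + m + 1 - s = m + 1 from by omega]
  have hterm : ∀ i ∈ range (m+1),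
      (-1:ℤ)^(s+i) * (s+m).choose (s+i) * ((s+m+(s+i)).choose (s+i)) * (s+i).choose s
        = ((s+m).choose s : ℤ) * (-1)^s *
            ((-1:ℤ)^i * m.choose i * (((s+m+s)+i).choose (s+m))) := by
    intro i hi
    have hi' : s + i ≤ s + m := by
      simp only [mem_range] at hi; omega
    have h1 : (s+m).choose (s+i) * (s+i).choose s = (s+m).choose s * m.choose i := by
      rw [Nat.choose_mul (Nat.le_add_right s i)]
      congr 1 <;> congr 1 <;> omega
    have h2 : (s+m+(s+i)).choose (s+i) = ((s+m+s)+i).choose (s+m) := by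
      have := Nat.choose_symm (show s+i ≤ s+m+(s+i) from by omega)
      rw [show s+m+(s+i) - (s+i) = s+m from by omega] at this
      rw [← this]
      congr 1
      omega
    rw [h2, pow_add]
    have h1' : ((s+m).choose (s+i) : ℤ) * (s+i).choose s = ((s+m).choose s : ℤ) * m.choose i := by
      exact_mod_cast congrArg (Nat.cast : ℕ → ℤ) h1
    linear_combination ((-1:ℤ)^s * (-1)^i * (((s+m+s)+i).choose (s+m) : ℤ)) * h1'
  rw [Finset.sum_congr rfl hterm, ← Finset.mul_sum, aux_key1 m (s+m+s) s]
  rw [show s+m+s = s+(s+m) from by omega, pow_add]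
  ring

theorem stmt_8 {R : Type*} [CommRing R] (n : ℕ) (z : R) :
    ∑ k ∈ Finset.Icc 1 n, (n.choose k : R) * ((n+k).choose k) * (k : R) * (-z)^(k-1)
    = (-1)^(n-1) * ∑ k ∈ Finset.Icc 1 n, (n.choose k : R) * ((n+k).choose k) * (k : R) * (z-1)^(k-1) := by
  have hIcc : ∀ (f : ℕ → R), ∑ k ∈ Icc 1 n, f k = ∑ i ∈ range n, f (i+1) := by
    intro f
    rw [← Finset.Ico_add_one_right_eq_Icc, Finset.sum_Ico_eq_sum_range]
    exact Finset.sum_congr rfl fun i _ => by rw [Nat.add_comm]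
  rw [hIcc (fun k => (n.choose k : R) * ((n+k).choose k) * (k : R) * (-z)^(k-1)),
      hIcc (fun k => (n.choose k : R) * ((n+k).choose k) * (k : R) * (z-1)^(k-1))]
  simp only [Nat.add_sub_cancel]
  -- abbreviation
  set A : ℕ → R := fun i => (n.choose (i+1) : R) * ((n+(i+1)).choose (i+1)) * ((i+1 : ℕ) : R) with hA
  have hz : ∀ i : ℕ, (z-1)^i = ∑ j ∈ range (i+1), z^j * (-1:R)^(i-j) * (i.choose j) := by
    intro i
    rw [show z - 1 = z + (-1) from by ring, add_pow]
  have tri : ∀ (G : ℕ → ℕ → R),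
      ∑ i ∈ range n, ∑ j ∈ range (i+1), G i j = ∑ j ∈ range n, ∑ i ∈ Ico j n, G i j := by
    intro G
    have h := (Finset.sum_Ico_Ico_comm 0 n (fun i j => G j i)).symm
    simp only [Finset.range_eq_Ico]
    exact h
  have hRHS : ∑ i ∈ range n, A i * (z-1)^i
      = ∑ j ∈ range n, ∑ i ∈ Ico j n, A i * (z^j * (-1:R)^(i-j) * (i.choose j)) := by
    rw [← tri]
    refine Finset.sum_congr rfl fun i _ => ?_
    rw [hz i, Finset.mul_sum]
  have inner : ∀ j ∈ range n, ∑ i ∈ Ico j n, A i * (z^j * (-1:R)^(i-j) * (i.choose j))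
      = (-1:R)^(n-1) * (A j * (-1)^j * z^j) := by
    intro j hj
    have hjn : j < n := mem_range.mp hj
    -- cast key2 to R
    have K := aux_key2 n (j+1) (by omega)
    have KR : ∑ k ∈ Icc (j+1) n, (-1:R)^k * (n.choose k) * ((n+k).choose k) * (k.choose (j+1))
        = (-1:R)^n * (n.choose (j+1)) * ((n+(j+1)).choose (j+1)) := by
      have h' := congrArg (fun x : ℤ => (x : R)) K
      push_cast at h'
      exact h'
    -- reindex both sums over range (n-j)
    rw [Finset.sum_Ico_eq_sum_range]
    rw [← Finset.Ico_add_one_right_eq_Icc, Finset.sum_Ico_eq_sum_range] at KR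
    simp only [show n + 1 - (j+1) = n - j from by omega] at KR
    have hterm : ∀ t ∈ range (n-j),
        A (j+t) * (z^j * (-1:R)^(j+t-j) * ((j+t).choose j))
          = (-(z^j * (-1:R)^j * ((j+1:ℕ) : R))) *
              ((-1:R)^(j+1+t) * (n.choose (j+1+t)) * ((n+(j+1+t)).choose (j+1+t)) * ((j+1+t).choose (j+1))) := by
      intro t _
      have hidx : j + t - j = t := by omega
      have hidx2 : j + 1 + t = j + t + 1 := by omega
      have hc : ((j+t+1 : ℕ) : R) * ((j+t).choose j : R)
          = ((j+t+1).choose (j+1) : R) * ((j+1 : ℕ) : R) := by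
        exact_mod_cast congrArg (Nat.cast : ℕ → R) (Nat.add_one_mul_choose_eq (j+t) j)
      have h1 : ((-1:R))^j * (-1)^j = 1 := by
        rw [← mul_pow]; norm_num
      rw [hidx, hidx2, hA]
      linear_combination (z^j * (-1:R)^t * (n.choose (j+t+1) : R) * ((n+(j+t+1)).choose (j+t+1) : R)) * hc
        - (z^j * ((j+t+1).choose (j+1) : R) * ((j+1:ℕ):R) * (-1:R)^t * (n.choose (j+t+1) : R) * ((n+(j+t+1)).choose (j+t+1) : R)) * h1
    rw [Finset.sum_congr rfl hterm, ← Finset.mul_sum, KR]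
    have hs : (-1:R)^n = (-1:R)^(n-1) * (-1) := by
      conv_lhs => rw [show n = (n-1)+1 from by omega]
      rw [pow_succ]
    rw [hs, hA]
    push_cast
    ring
  rw [hRHS, Finset.sum_congr rfl inner, Finset.mul_sum]
  refine Finset.sum_congr rfl fun i _ => ?_
  have : (-1:R)^(n-1) * ((-1:R)^(n-1) * (A i * (-1)^i * z^i)) = A i * (-1)^i * z^i := by
    rw [← mul_assoc, ← pow_add, Even.neg_one_pow ⟨n-1, rfl⟩, one_mul]
  rw [this, hA]
  rw [show (-z)^i = (-1:R)^i * z^i from by rw [neg_pow]]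
  ring
end

section
/- For any prime p and any nonnegative integers k, l, the sum over n from 0 to p-1 of C(n,k)*C(n,l) equals p times the sum over n from 0 to k+l of (1/(n+1)) * C(n,l)*C(l,n-k)*C(p-1,n). -/
open Finset

lemma hs_sum (p m : ℕ) : ∑ n ∈ Finset.range p, n.choose m = p.choose (m+1) := by
  induction p with
  | zero => simp
  | succ p ih => rw [Finset.sum_range_succ, ih, Nat.choose_succ_succ' p m]; omega

lemma lemA (n k l : ℕ) :
    n.choose k * n.choose l
      = ∑ m ∈ Finset.range (k+l+1), m.choose l * l.choose (k+l-m) * n.choose m := by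
  rcases lt_or_ge n l with h | h
  · rw [Nat.choose_eq_zero_of_lt h, mul_zero]
    refine (Finset.sum_eq_zero fun m hm => ?_).symm
    rcases lt_or_ge m l with h1 | h1
    · rw [Nat.choose_eq_zero_of_lt h1]; ring
    · rw [Nat.choose_eq_zero_of_lt (lt_of_lt_of_le h h1), mul_zero]
  · have hv : n.choose k = ∑ j ∈ Finset.range (k+1), l.choose j * (n-l).choose (k-j) := by
      conv_lhs => rw [show n = l + (n - l) by omega]
      rw [Nat.add_choose_eq, Finset.Nat.sum_antidiagonal_eq_sum_range_succ_mk]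
    rw [hv, Finset.sum_mul]
    have key : ∀ j ∈ Finset.range (k+1),
        l.choose j * (n-l).choose (k-j) * n.choose l
          = (k+l-j).choose l * l.choose (k+l-(k+l-j)) * n.choose (k+l-j) := by
      intro j hj
      simp only [Finset.mem_range] at hj
      rw [show k+l-(k+l-j) = j by omega]
      rcases le_or_gt (k+l-j) n with h2 | h2
      · have h5 := Nat.choose_mul (n := n) (k := k+l-j) (s := l) (by omega)
        rw [show k + l - j - l = k - j by omega] at h5
        calc l.choose j * (n-l).choose (k-j) * n.choose l
            = l.choose j * (n.choose l * (n-l).choose (k-j)) := by ring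
          _ = l.choose j * (n.choose (k+l-j) * (k+l-j).choose l) := by rw [h5]
          _ = (k+l-j).choose l * l.choose j * n.choose (k+l-j) := by ring
      · rw [Nat.choose_eq_zero_of_lt h2,
          Nat.choose_eq_zero_of_lt (show n - l < k - j by omega), mul_zero]
        ring
    rw [Finset.sum_congr rfl key]
    rw [← Finset.sum_range_reflect
      (fun m => m.choose l * l.choose (k+l-m) * n.choose m) (k+l+1)]
    simp only [Nat.add_sub_cancel]
    refine Finset.sum_subset (Finset.range_subset_range.mpr (by omega)) ?_
    intro j hj hj'
    simp only [Finset.mem_range] at hj hj'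
    rw [Nat.choose_eq_zero_of_lt (show k+l-j < l by omega)]
    ring

theorem stmt_9 (p : ℕ) (hp : p.Prime) (k l : ℕ) :
    ∑ n ∈ Finset.range p, (n.choose k : ℚ) * (n.choose l)
    = (p : ℚ) * ∑ n ∈ Finset.range (k+l+1),
        (1 / ((n : ℚ) + 1)) * (n.choose l) * (if k ≤ n then (l.choose (n - k) : ℚ) else 0)
          * ((p-1).choose n) := by
  have hp1 : 1 ≤ p := hp.one_lt.le
  have hcast : ∀ n : ℕ, (n.choose k : ℚ) * n.choose l
      = ∑ m ∈ Finset.range (k+l+1),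
          ((m.choose l : ℚ) * (l.choose (k+l-m) : ℚ)) * (n.choose m : ℚ) := by
    intro n
    rw [← Nat.cast_mul, lemA n k l]
    push_cast
    exact Finset.sum_congr rfl (fun m _ => by ring)
  rw [Finset.sum_congr rfl fun n _ => hcast n, Finset.sum_comm, Finset.mul_sum]
  refine Finset.sum_congr rfl fun m hm => ?_
  simp only [Finset.mem_range] at hm
  rw [← Finset.mul_sum]
  have h2 : (∑ n ∈ Finset.range p, (n.choose m : ℚ)) = (p.choose (m+1) : ℚ) := by
    rw [← Nat.cast_sum, hs_sum]
  rw [h2]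
  have h3 : (if k ≤ m then (l.choose (m - k) : ℚ) else 0) = (l.choose (k+l-m) : ℚ) := by
    by_cases hk : k ≤ m
    · rw [if_pos hk, show k+l-m = l-(m-k) by omega, Nat.choose_symm (by omega)]
    · rw [if_neg hk, Nat.choose_eq_zero_of_lt (show l < k+l-m by omega), Nat.cast_zero]
  rw [h3]
  have h4 : (p : ℚ) * ((p-1).choose m : ℚ) = (p.choose (m+1) : ℚ) * ((m : ℚ) + 1) := by
    have := Nat.add_one_mul_choose_eq (p-1) m
    rw [show p - 1 + 1 = p by omega] at this
    exact_mod_cast congrArg (Nat.cast : ℕ → ℚ) this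
  have hm1 : ((m : ℚ) + 1) ≠ 0 := by positivity
  field_simp
  linear_combination (-((m.choose l : ℚ) * (l.choose (k+l-m) : ℚ))) * h4
end

section
/- For any prime p and any nonnegative integers k, l, the sum over n from 0 to p-1 of (n+1)*C(n,k)*C(n,l) equals the sum over n from 0 to k+l of (p(p+1)/(n+2)) * C(n,l)*C(l,n-k)*C(p-1,n). -/
open Finset

private lemma key1 (n k j : ℕ) :
    n.choose k * (n - k).choose j = n.choose (k + j) * (k + j).choose k := by
  rcases le_or_gt (k + j) n with h | h
  · rw [Nat.choose_mul (Nat.le_add_right k j), Nat.add_sub_cancel_left]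
  · rcases le_or_gt k n with hk | hk
    · rw [Nat.choose_eq_zero_of_lt (show n - k < j by omega), mul_zero,
        Nat.choose_eq_zero_of_lt h, zero_mul]
    · rw [Nat.choose_eq_zero_of_lt hk, zero_mul,
        Nat.choose_eq_zero_of_lt (show n < k + j by omega), zero_mul]

private lemma key2 (k l i : ℕ) (hil : i ≤ l) :
    (k + l - i).choose l * l.choose (l - i) = (k + l - i).choose k * k.choose i := by
  rcases le_or_gt i k with h | h
  · rw [Nat.choose_mul (Nat.sub_le l i),
      show k + l - i - (l - i) = k by omega, show l - (l - i) = i by omega]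
    congr 1
    rw [← Nat.choose_symm (show k ≤ k + l - i by omega), show k + l - i - k = l - i by omega]
  · rw [Nat.choose_eq_zero_of_lt (show k + l - i < l by omega), zero_mul,
      Nat.choose_eq_zero_of_lt h, mul_zero]

private lemma prod_choose (n k l : ℕ) :
    (n.choose k : ℚ) * n.choose l
    = ∑ m ∈ range (k + l + 1),
        (m.choose l : ℚ) * (if k ≤ m then (l.choose (m - k) : ℚ) else 0) * n.choose m := by
  have hRHS : ∑ m ∈ range (k + l + 1),
        (m.choose l : ℚ) * (if k ≤ m then (l.choose (m - k) : ℚ) else 0) * n.choose m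
      = ∑ j ∈ range (l + 1), ((k + j).choose l : ℚ) * l.choose j * n.choose (k + j) := by
    rw [range_eq_Ico, ← Finset.sum_Ico_consecutive _ (Nat.zero_le k)
      (show k ≤ k + l + 1 by omega)]
    have h0 : ∑ m ∈ Ico 0 k,
        (m.choose l : ℚ) * (if k ≤ m then (l.choose (m - k) : ℚ) else 0) * n.choose m = 0 := by
      refine Finset.sum_eq_zero fun m hm => ?_
      simp only [mem_Ico] at hm
      rw [if_neg (by omega)]
      ring
    rw [h0, zero_add, Finset.sum_Ico_eq_sum_range, show k + l + 1 - k = l + 1 by omega]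
    refine Finset.sum_congr rfl fun j hj => ?_
    rw [if_pos (Nat.le_add_right k j), Nat.add_sub_cancel_left]
  rw [hRHS]
  rcases lt_or_ge n k with h | h
  · rw [Nat.choose_eq_zero_of_lt h]
    push_cast
    rw [zero_mul]
    refine (Finset.sum_eq_zero fun j hj => ?_).symm
    rw [Nat.choose_eq_zero_of_lt (show n < k + j by omega)]
    push_cast
    ring
  · have expand : (n.choose l : ℚ) = ∑ i ∈ range (l + 1),
        ((k.choose i : ℚ) * ((n - k).choose (l - i) : ℚ)) := by
      have h1 := Nat.add_choose_eq k (n - k) l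
      rw [Finset.Nat.sum_antidiagonal_eq_sum_range_succ_mk] at h1
      rw [show k + (n - k) = n by omega] at h1
      rw [h1]
      push_cast
      rfl
    rw [expand, Finset.mul_sum]
    conv_rhs => rw [← Finset.sum_range_reflect]
    refine Finset.sum_congr rfl fun i hi => ?_
    simp only [mem_range, Nat.add_sub_cancel] at hi ⊢
    have hil : i ≤ l := by omega
    have hnat : n.choose k * (k.choose i * (n - k).choose (l - i))
        = (k + (l - i)).choose l * l.choose (l - i) * n.choose (k + (l - i)) :=
      calc n.choose k * (k.choose i * (n - k).choose (l - i))
          = (n.choose k * (n - k).choose (l - i)) * k.choose i := by ring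
        _ = (n.choose (k + (l - i)) * (k + (l - i)).choose k) * k.choose i := by rw [key1]
        _ = ((k + l - i).choose k * k.choose i) * n.choose (k + l - i) := by
            rw [show k + (l - i) = k + l - i by omega]; ring
        _ = ((k + l - i).choose l * l.choose (l - i)) * n.choose (k + l - i) := by
            rw [key2 k l i hil]
        _ = _ := by rw [show k + (l - i) = k + l - i by omega]
    exact_mod_cast hnat

private lemma hockey (p m : ℕ) :
    ∑ n ∈ range p, (n + 1) * n.choose m = (m + 1) * (p + 1).choose (m + 2) := by
  have h1 : ∀ n : ℕ, (n + 1) * n.choose m = (n + 1).choose (m + 1) * (m + 1) := fun n =>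
    Nat.add_one_mul_choose_eq n m
  have h2 : ∑ n ∈ range (p + 1), n.choose (m + 1) = (p + 1).choose (m + 2) := by
    rw [← Nat.sum_Icc_choose p (m + 1)]
    refine (Finset.sum_subset (fun x hx => ?_) fun x hx hx' => ?_).symm
    · simp only [Finset.mem_Icc, Finset.mem_range] at *
      omega
    · refine Nat.choose_eq_zero_of_lt ?_
      simp only [Finset.mem_Icc, Finset.mem_range] at *
      omega
  calc ∑ n ∈ range p, (n + 1) * n.choose m
      = ∑ n ∈ range p, (n + 1).choose (m + 1) * (m + 1) := by
        exact Finset.sum_congr rfl fun n _ => h1 n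
    _ = (∑ n ∈ range p, (n + 1).choose (m + 1)) * (m + 1) := by rw [Finset.sum_mul]
    _ = (∑ n ∈ range (p + 1), n.choose (m + 1)) * (m + 1) := by
        rw [Finset.sum_range_succ' (fun n => n.choose (m + 1)) p]
        simp
    _ = (m + 1) * (p + 1).choose (m + 2) := by rw [h2]; ring

private lemma coeff_eq (p m : ℕ) (hp : 1 ≤ p) :
    (p : ℚ) * ((p : ℚ) + 1) / ((m : ℚ) + 2) * ((p - 1).choose m)
      = ((m : ℚ) + 1) * ((p + 1).choose (m + 2)) := by
  have key : p * (p + 1) * (p - 1).choose m = ((m + 1) * (m + 2)) * (p + 1).choose (m + 2) := by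
    have e1 : p * (p - 1).choose m = p.choose (m + 1) * (m + 1) := by
      have := Nat.add_one_mul_choose_eq (p - 1) m
      rwa [show p - 1 + 1 = p by omega] at this
    have e2 : (p + 1) * p.choose (m + 1) = (p + 1).choose (m + 2) * (m + 2) :=
      Nat.add_one_mul_choose_eq p (m + 1)
    calc p * (p + 1) * (p - 1).choose m = (p + 1) * (p * (p - 1).choose m) := by ring
      _ = (p + 1) * (p.choose (m + 1) * (m + 1)) := by rw [e1]
      _ = (m + 1) * ((p + 1) * p.choose (m + 1)) := by ring
      _ = (m + 1) * ((p + 1).choose (m + 2) * (m + 2)) := by rw [e2]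
      _ = _ := by ring
  have keyQ : (p : ℚ) * ((p : ℚ) + 1) * ((p - 1).choose m)
      = (((m : ℚ) + 1) * ((m : ℚ) + 2)) * ((p + 1).choose (m + 2)) := by exact_mod_cast key
  have hm2 : ((m : ℚ) + 2) ≠ 0 := by positivity
  field_simp
  linarith [keyQ]

theorem stmt_10 (p : ℕ) (hp : p.Prime) (k l : ℕ) :
    ∑ n ∈ Finset.range p, ((n : ℚ) + 1) * (n.choose k) * (n.choose l)
    = ∑ n ∈ Finset.range (k+l+1),
        ((p : ℚ) * ((p : ℚ) + 1) / ((n : ℚ) + 2)) * (n.choose l)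
          * (if k ≤ n then (l.choose (n - k) : ℚ) else 0) * ((p-1).choose n) := by
  have hp1 : 1 ≤ p := hp.one_lt.le.trans' (by omega)
  calc ∑ n ∈ Finset.range p, ((n : ℚ) + 1) * (n.choose k) * (n.choose l)
      = ∑ n ∈ Finset.range p, ∑ m ∈ range (k + l + 1),
          (m.choose l : ℚ) * (if k ≤ m then (l.choose (m - k) : ℚ) else 0)
            * (((n : ℚ) + 1) * n.choose m) := by
        refine Finset.sum_congr rfl fun n _ => ?_
        rw [mul_assoc, prod_choose n k l, Finset.mul_sum]
        exact Finset.sum_congr rfl fun m _ => by ring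
    _ = ∑ m ∈ range (k + l + 1),
          (m.choose l : ℚ) * (if k ≤ m then (l.choose (m - k) : ℚ) else 0)
            * (∑ n ∈ Finset.range p, ((n : ℚ) + 1) * n.choose m) := by
        rw [Finset.sum_comm]
        exact Finset.sum_congr rfl fun m _ => by rw [Finset.mul_sum]
    _ = _ := by
        refine Finset.sum_congr rfl fun m _ => ?_
        have hsum : ∑ n ∈ Finset.range p, ((n : ℚ) + 1) * n.choose m
            = ((m : ℚ) + 1) * ((p + 1).choose (m + 2)) := by
          have := hockey p m
          have hQ : ((∑ n ∈ range p, (n + 1) * n.choose m : ℕ) : ℚ)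
              = (((m + 1) * (p + 1).choose (m + 2) : ℕ) : ℚ) := by exact_mod_cast this
          push_cast at hQ
          rw [← hQ]
        rw [hsum, ← coeff_eq p m hp1]
        ring
end

section
/- Let p be an odd prime and x a p-adic integer with m := ⟨x⟩_p ≤ (p-1)/2, where ⟨x⟩_p is the least nonnegative residue of x mod p, and write x = m + p·t. Then for 0 ≤ k ≤ m, C(x,k)*C(x+k,k) ≡ C(m,k)*C(m+k,k)*(1 + p·t·H_{m+k} − p·t·H_{m−k}) (mod p^2), where H_n is the n-th harmonic number; and for p−m ≤ k ≤ p−1, C(x,k)*C(x+k,k) ≡ 0 (mod p^2). -/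
open Finset

/-- Generalized binomial coefficient `C(x, k) = x(x-1)⋯(x-k+1)/k!` in `ℚ_[p]`. -/
noncomputable def gbinom {p : ℕ} [Fact p.Prime] (x : ℚ_[p]) (k : ℕ) : ℚ_[p] :=
  (∏ i ∈ Finset.range k, (x - i)) / (k.factorial : ℚ_[p])

/-- Harmonic number `H_n = ∑_{j=1}^n 1/j` in `ℚ_[p]`. -/
noncomputable def harmonic' {p : ℕ} [Fact p.Prime] (n : ℕ) : ℚ_[p] :=
  ∑ j ∈ Finset.range n, ((j : ℚ_[p]) + 1)⁻¹

section Aux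
variable {p : ℕ} [Fact p.Prime]

lemma norm_natCast_le_one' (n : ℕ) : ‖(n : ℚ_[p])‖ ≤ 1 := by
  exact_mod_cast Padic.norm_int_le_one (n : ℤ)

lemma norm_natCast_eq_one' {n : ℕ} (h : ¬ p ∣ n) : ‖(n : ℚ_[p])‖ = 1 := by
  refine le_antisymm (norm_natCast_le_one' n) ?_
  by_contra hlt
  push_neg at hlt
  have h2 : ‖((n : ℤ) : ℚ_[p])‖ < 1 := by exact_mod_cast hlt
  rw [Padic.norm_intCast_lt_one_iff] at h2
  exact h (Int.natCast_dvd_natCast.mp h2)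

lemma norm_natCast_eq_one {n : ℕ} (h0 : 0 < n) (h1 : n < p) : ‖(n : ℚ_[p])‖ = 1 :=
  norm_natCast_eq_one' fun hd => absurd (Nat.le_of_dvd h0 hd) (by omega)

lemma norm_sum_le_one {n : ℕ} {g : ℕ → ℚ_[p]} (h : ∀ i < n, ‖g i‖ ≤ 1) :
    ‖∑ i ∈ range n, g i‖ ≤ 1 := by
  induction n with
  | zero => simp
  | succ n ih =>
    rw [Finset.sum_range_succ]
    exact le_trans (Padic.nonarchimedean _ _)
      (max_le (ih fun i hi => h i (by omega)) (h n (by omega)))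

lemma key_lemma (ε : ℚ_[p]) (hε : ‖ε‖ ≤ 1) (n : ℕ) (f : ℕ → ℚ_[p]) (hf : ∀ i < n, ‖f i‖ = 1) :
    ‖(∏ i ∈ range n, (f i + ε)) -
      (∏ i ∈ range n, f i) * (1 + ε * ∑ i ∈ range n, (f i)⁻¹)‖ ≤ ‖ε‖ ^ 2 := by
  induction n with
  | zero => simp [pow_two]; positivity
  | succ n ih =>
    have hfn : ‖f n‖ = 1 := hf n (by omega)
    have hf' : ∀ i < n, ‖f i‖ = 1 := fun i hi => hf i (by omega)
    have hu : f n ≠ 0 := by intro h; rw [h] at hfn; simp at hfn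
    set A := ∏ i ∈ range n, (f i + ε) with hA
    set B := ∏ i ∈ range n, f i with hBdef
    set S := ∑ i ∈ range n, (f i)⁻¹ with hSdef
    have hB : ‖B‖ = 1 := by
      rw [hBdef, norm_prod]
      exact Finset.prod_eq_one fun i hi => hf' i (Finset.mem_range.mp hi)
    have hS : ‖S‖ ≤ 1 :=
      norm_sum_le_one fun i hi => by rw [norm_inv, hf' i hi]; norm_num
    rw [Finset.prod_range_succ, Finset.prod_range_succ, Finset.sum_range_succ]
    have hid : A * (f n + ε) - B * f n * (1 + ε * (S + (f n)⁻¹)) =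
        (A - B * (1 + ε * S)) * (f n + ε) + ε ^ 2 * B * S := by
      field_simp
      ring
    rw [hid]
    refine le_trans (Padic.nonarchimedean _ _) (max_le ?_ ?_)
    · rw [norm_mul]
      have h1 : ‖f n + ε‖ ≤ 1 := le_trans (Padic.nonarchimedean _ _)
        (max_le (le_of_eq hfn) hε)
      calc ‖A - B * (1 + ε * S)‖ * ‖f n + ε‖ ≤ ‖ε‖ ^ 2 * 1 :=
            mul_le_mul (ih hf') h1 (norm_nonneg _) (by positivity)
        _ = ‖ε‖ ^ 2 := mul_one _
    · rw [norm_mul, norm_mul, norm_pow, hB, mul_one]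
      calc ‖ε‖ ^ 2 * ‖S‖ ≤ ‖ε‖ ^ 2 * 1 :=
            mul_le_mul_of_nonneg_left hS (by positivity)
        _ = ‖ε‖ ^ 2 := mul_one _

lemma glue_lemma {A₁ B₁ S₁ A₂ B₂ S₂ ε : ℚ_[p]} (hε : ‖ε‖ ≤ 1)
    (h₁ : ‖A₁ - B₁ * (1 + ε * S₁)‖ ≤ ‖ε‖ ^ 2) (h₂ : ‖A₂ - B₂ * (1 + ε * S₂)‖ ≤ ‖ε‖ ^ 2)
    (hA₁ : ‖A₁‖ ≤ 1) (hB₁ : ‖B₁‖ ≤ 1) (hB₂ : ‖B₂‖ ≤ 1) (hS₁ : ‖S₁‖ ≤ 1) (hS₂ : ‖S₂‖ ≤ 1) :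
    ‖A₁ * A₂ - B₁ * B₂ * (1 + ε * (S₁ + S₂))‖ ≤ ‖ε‖ ^ 2 := by
  have hid : A₁ * A₂ - B₁ * B₂ * (1 + ε * (S₁ + S₂)) =
      A₁ * (A₂ - B₂ * (1 + ε * S₂)) + (B₂ * (1 + ε * S₂)) * (A₁ - B₁ * (1 + ε * S₁))
        + ε ^ 2 * (B₁ * B₂ * (S₁ * S₂)) := by ring
  have hX : ‖1 + ε * S₂‖ ≤ 1 := le_trans (Padic.nonarchimedean _ _)
    (max_le (by simp) (by rw [norm_mul]; exact mul_le_one₀ hε (norm_nonneg _) hS₂))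
  rw [hid]
  refine le_trans (Padic.nonarchimedean _ _) (max_le (le_trans (Padic.nonarchimedean _ _) (max_le ?_ ?_)) ?_)
  · rw [norm_mul]
    calc ‖A₁‖ * ‖A₂ - B₂ * (1 + ε * S₂)‖ ≤ 1 * (‖ε‖ ^ 2) :=
          mul_le_mul hA₁ h₂ (norm_nonneg _) (by norm_num)
      _ = ‖ε‖ ^ 2 := one_mul _
  · rw [norm_mul]
    have : ‖B₂ * (1 + ε * S₂)‖ ≤ 1 := by
      rw [norm_mul]; exact mul_le_one₀ hB₂ (norm_nonneg _) hX
    calc ‖B₂ * (1 + ε * S₂)‖ * ‖A₁ - B₁ * (1 + ε * S₁)‖ ≤ 1 * (‖ε‖ ^ 2) :=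
          mul_le_mul this h₁ (norm_nonneg _) (by norm_num)
      _ = ‖ε‖ ^ 2 := one_mul _
  · rw [norm_mul, norm_pow]
    have : ‖B₁ * B₂ * (S₁ * S₂)‖ ≤ 1 := by
      rw [norm_mul, norm_mul, norm_mul]
      exact mul_le_one₀ (mul_le_one₀ hB₁ (norm_nonneg _) hB₂) (by positivity)
        (mul_le_one₀ hS₁ (norm_nonneg _) hS₂)
    calc ‖ε‖ ^ 2 * ‖B₁ * B₂ * (S₁ * S₂)‖ ≤ ‖ε‖ ^ 2 * 1 :=
          mul_le_mul_of_nonneg_left this (by positivity)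
      _ = ‖ε‖ ^ 2 := mul_one _

lemma harmonic'_add (n k : ℕ) :
    harmonic' (p := p) (n + k) = harmonic' n + ∑ i ∈ range k, ((n + i + 1 : ℕ) : ℚ_[p])⁻¹ := by
  rw [harmonic', harmonic', Finset.sum_range_add]
  congr 1
  refine Finset.sum_congr rfl fun i hi => ?_
  push_cast
  ring_nf

end Aux

theorem stmt_11 (p : ℕ) [Fact p.Prime] (hp : p ≠ 2) (x t : ℚ_[p]) (m : ℕ)
    (ht : ‖t‖ ≤ 1) (hx : x = (m : ℚ_[p]) + (p : ℚ_[p]) * t) (hm : m ≤ (p - 1) / 2) :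
    (∀ k : ℕ, k ≤ m →
      ‖gbinom x k * gbinom (x + (k : ℚ_[p])) k -
        (m.choose k : ℚ_[p]) * ((m+k).choose k : ℚ_[p]) *
          (1 + (p : ℚ_[p]) * t * harmonic' (m + k) - (p : ℚ_[p]) * t * harmonic' (m - k))‖
        ≤ (p : ℝ) ^ (-2 : ℤ)) ∧
    (∀ k : ℕ, p - m ≤ k → k ≤ p - 1 →
      ‖gbinom x k * gbinom (x + (k : ℚ_[p])) k‖ ≤ (p : ℝ) ^ (-2 : ℤ)) := by
  have hprime : p.Prime := Fact.out
  have hp2 : 2 ≤ p := hprime.two_le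
  have hp3 : 3 ≤ p := by omega
  have h2m : 2 * m + 1 ≤ p := by omega
  set ε : ℚ_[p] := (p : ℚ_[p]) * t with hεdef
  have hεle : ‖ε‖ ≤ (p : ℝ)⁻¹ := by
    rw [hεdef, norm_mul, Padic.norm_p]
    calc (p:ℝ)⁻¹ * ‖t‖ ≤ (p:ℝ)⁻¹ * 1 := mul_le_mul_of_nonneg_left ht (by positivity)
      _ = _ := mul_one _
  have hpR1 : (1:ℝ) ≤ (p:ℝ) := by exact_mod_cast hp2.trans' (by norm_num)
  have hpinv1 : ((p:ℝ))⁻¹ ≤ 1 := by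
    rw [inv_le_one₀ (by positivity)]; exact hpR1
  have hε1 : ‖ε‖ ≤ 1 := le_trans hεle hpinv1
  have hpow2 : ((p:ℝ)) ^ (-2:ℤ) = (p:ℝ)⁻¹ * (p:ℝ)⁻¹ := by
    have hp0 : (p:ℝ) ≠ 0 := by positivity
    rw [show (-2:ℤ) = (-1) + (-1) by norm_num, zpow_add₀ hp0, zpow_neg_one]
  have hε2 : ‖ε‖ ^ 2 ≤ (p:ℝ) ^ (-2:ℤ) := by
    rw [hpow2, pow_two]
    exact mul_le_mul hεle hεle (norm_nonneg _) (by positivity)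
  constructor
  · -- Part 1
    intro k hk
    have hfac : ¬ p ∣ k.factorial := by
      rw [Nat.Prime.dvd_factorial hprime]
      omega
    have hD : ‖(k.factorial : ℚ_[p])‖ = 1 := norm_natCast_eq_one' hfac
    have hD0 : (k.factorial : ℚ_[p]) ≠ 0 := by
      intro h; rw [h] at hD; simp at hD
    have hf₁norm : ∀ i < k, ‖((m - i : ℕ) : ℚ_[p])‖ = 1 := fun i hi =>
      norm_natCast_eq_one (by omega) (by omega)
    have hf₂norm : ∀ i < k, ‖((m + i + 1 : ℕ) : ℚ_[p])‖ = 1 := fun i hi =>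
      norm_natCast_eq_one (by omega) (by omega)
    have hA1 : ∏ i ∈ range k, (((m - i : ℕ) : ℚ_[p]) + ε) = ∏ i ∈ range k, (x - (i:ℚ_[p])) := by
      refine Finset.prod_congr rfl fun i hi => ?_
      rw [mem_range] at hi
      rw [hx, Nat.cast_sub (by omega : i ≤ m), hεdef]
      ring
    have hA2 : ∏ i ∈ range k, (((m + i + 1 : ℕ) : ℚ_[p]) + ε)
        = ∏ i ∈ range k, (x + (k:ℚ_[p]) - (i:ℚ_[p])) := by
      rw [← Finset.prod_range_reflect (fun i => x + (k:ℚ_[p]) - (i:ℚ_[p])) k]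
      refine Finset.prod_congr rfl fun i hi => ?_
      rw [mem_range] at hi
      have h5 : (k - 1 - i : ℕ) = k - (1 + i) := by omega
      rw [hx, hεdef, h5, Nat.cast_sub (by omega : 1 + i ≤ k)]
      push_cast
      ring
    have hB1' : (∏ i ∈ range k, ((m - i : ℕ) : ℚ_[p]))
        = (k.factorial : ℚ_[p]) * (m.choose k : ℚ_[p]) := by
      rw [← Nat.cast_prod, ← Nat.descFactorial_eq_prod_range,
        Nat.descFactorial_eq_factorial_mul_choose]
      push_cast
      ring
    have hnat2 : ∏ i ∈ range k, (m + i + 1) = (m + k).descFactorial k := by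
      rw [Nat.descFactorial_eq_prod_range, ← Finset.prod_range_reflect (fun i => m + i + 1) k]
      refine Finset.prod_congr rfl fun i hi => ?_
      rw [mem_range] at hi
      omega
    have hB2' : (∏ i ∈ range k, ((m + i + 1 : ℕ) : ℚ_[p]))
        = (k.factorial : ℚ_[p]) * ((m + k).choose k : ℚ_[p]) := by
      rw [← Nat.cast_prod, hnat2, Nat.descFactorial_eq_factorial_mul_choose]
      push_cast
      ring
    have hS2 : harmonic' (p := p) (m + k)
        = harmonic' m + ∑ i ∈ range k, ((m + i + 1 : ℕ) : ℚ_[p])⁻¹ := harmonic'_add m k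
    have hS1 : harmonic' (p := p) m
        = harmonic' (m - k) + ∑ i ∈ range k, ((m - i : ℕ) : ℚ_[p])⁻¹ := by
      have h2 : ∑ i ∈ range k, ((m - i : ℕ) : ℚ_[p])⁻¹
          = ∑ i ∈ range k, (((m - k) + i + 1 : ℕ) : ℚ_[p])⁻¹ := by
        rw [← Finset.sum_range_reflect (fun i => (((m - k) + i + 1 : ℕ) : ℚ_[p])⁻¹) k]
        refine Finset.sum_congr rfl fun i hi => ?_
        rw [mem_range] at hi
        have h6 : (m - i : ℕ) = (m - k) + (k - 1 - i) + 1 := by omega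
        rw [h6]
      rw [h2, ← harmonic'_add]
      congr 1
      omega
    have h₁ := key_lemma ε hε1 k (fun i => ((m - i : ℕ) : ℚ_[p])) hf₁norm
    have h₂ := key_lemma ε hε1 k (fun i => ((m + i + 1 : ℕ) : ℚ_[p])) hf₂norm
    have hA1le : ‖∏ i ∈ range k, (((m - i : ℕ) : ℚ_[p]) + ε)‖ ≤ 1 := by
      rw [norm_prod]
      refine Finset.prod_le_one (fun i _ => norm_nonneg _) (fun i hi => ?_)
      rw [mem_range] at hi
      exact le_trans (Padic.nonarchimedean _ _) (max_le (le_of_eq (hf₁norm i hi)) hε1)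
    have hB1le : ‖∏ i ∈ range k, ((m - i : ℕ) : ℚ_[p])‖ ≤ 1 := by
      rw [norm_prod]
      exact Finset.prod_le_one (fun i _ => norm_nonneg _)
        (fun i hi => le_of_eq (hf₁norm i (mem_range.mp hi)))
    have hB2le : ‖∏ i ∈ range k, ((m + i + 1 : ℕ) : ℚ_[p])‖ ≤ 1 := by
      rw [norm_prod]
      exact Finset.prod_le_one (fun i _ => norm_nonneg _)
        (fun i hi => le_of_eq (hf₂norm i (mem_range.mp hi)))
    have hS1le : ‖∑ i ∈ range k, ((m - i : ℕ) : ℚ_[p])⁻¹‖ ≤ 1 :=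
      norm_sum_le_one fun i hi => by rw [norm_inv, hf₁norm i hi]; norm_num
    have hS2le : ‖∑ i ∈ range k, ((m + i + 1 : ℕ) : ℚ_[p])⁻¹‖ ≤ 1 :=
      norm_sum_le_one fun i hi => by rw [norm_inv, hf₂norm i hi]; norm_num
    have emain : gbinom x k * gbinom (x + (k:ℚ_[p])) k -
        (m.choose k : ℚ_[p]) * ((m+k).choose k : ℚ_[p]) *
          (1 + ε * harmonic' (m + k) - ε * harmonic' (m - k))
        = ((∏ i ∈ range k, (((m - i : ℕ) : ℚ_[p]) + ε)) *
            (∏ i ∈ range k, (((m + i + 1 : ℕ) : ℚ_[p]) + ε))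
          - (∏ i ∈ range k, ((m - i : ℕ) : ℚ_[p])) * (∏ i ∈ range k, ((m + i + 1 : ℕ) : ℚ_[p]))
            * (1 + ε * ((∑ i ∈ range k, ((m - i : ℕ) : ℚ_[p])⁻¹)
                + ∑ i ∈ range k, ((m + i + 1 : ℕ) : ℚ_[p])⁻¹)))
          / ((k.factorial : ℚ_[p]) * (k.factorial : ℚ_[p])) := by
      rw [gbinom, gbinom, ← hA1, ← hA2, hS2, hS1, hB1', hB2']
      field_simp
      ring
    rw [emain, norm_div, norm_mul, hD, mul_one, div_one]
    exact le_trans (glue_lemma hε1 h₁ h₂ hA1le hB1le hB2le hS1le hS2le) hε2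
  · -- Part 2
    intro k hk1 hk2
    have hmk : m < k := by omega
    have hkp : k < p := by omega
    have hfac : ¬ p ∣ k.factorial := by
      rw [Nat.Prime.dvd_factorial hprime]
      omega
    have hD : ‖(k.factorial : ℚ_[p])‖ = 1 := norm_natCast_eq_one' hfac
    have hxle : ‖x‖ ≤ 1 := by
      rw [hx]
      exact le_trans (Padic.nonarchimedean _ _)
        (max_le (norm_natCast_le_one' m) hε1)
    have hxi : ∀ i : ℕ, ‖x - (i:ℚ_[p])‖ ≤ 1 := fun i => by
      rw [sub_eq_add_neg]
      exact le_trans (Padic.nonarchimedean _ _)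
        (max_le hxle (by rw [norm_neg]; exact norm_natCast_le_one' i))
    have hP1 : ‖∏ i ∈ range k, (x - (i:ℚ_[p]))‖ ≤ (p:ℝ)⁻¹ := by
      rw [← Finset.mul_prod_erase _ _ (mem_range.mpr hmk), norm_mul]
      have h1 : ‖x - (m:ℚ_[p])‖ ≤ (p:ℝ)⁻¹ := by
        rw [hx]
        simpa using hεle
      have h2 : ‖∏ i ∈ (range k).erase m, (x - (i:ℚ_[p]))‖ ≤ 1 := by
        rw [norm_prod]
        exact Finset.prod_le_one (fun i _ => norm_nonneg _) (fun i _ => hxi i)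
      calc ‖x - (m:ℚ_[p])‖ * ‖∏ i ∈ (range k).erase m, (x - (i:ℚ_[p]))‖
          ≤ (p:ℝ)⁻¹ * 1 := mul_le_mul h1 h2 (norm_nonneg _) (by positivity)
        _ = _ := mul_one _
    have hi₀ : k - (p - m) ∈ range k := mem_range.mpr (by omega)
    have hxi2 : ∀ i : ℕ, ‖x + (k:ℚ_[p]) - (i:ℚ_[p])‖ ≤ 1 := fun i => by
      rw [sub_eq_add_neg]
      refine le_trans (Padic.nonarchimedean _ _) (max_le ?_ ?_)
      · exact le_trans (Padic.nonarchimedean _ _) (max_le hxle (norm_natCast_le_one' k))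
      · rw [norm_neg]; exact norm_natCast_le_one' i
    have hP2 : ‖∏ i ∈ range k, (x + (k:ℚ_[p]) - (i:ℚ_[p]))‖ ≤ (p:ℝ)⁻¹ := by
      rw [← Finset.mul_prod_erase _ _ hi₀, norm_mul]
      have hval : x + (k:ℚ_[p]) - ((k - (p - m) : ℕ):ℚ_[p]) = (p:ℚ_[p]) * (1 + t) := by
        rw [hx, hεdef, Nat.cast_sub (by omega : p - m ≤ k), Nat.cast_sub (by omega : m ≤ p)]
        ring
      have h1 : ‖x + (k:ℚ_[p]) - ((k - (p - m) : ℕ):ℚ_[p])‖ ≤ (p:ℝ)⁻¹ := by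
        rw [hval, norm_mul, Padic.norm_p]
        have h1t : ‖(1:ℚ_[p]) + t‖ ≤ 1 :=
          le_trans (Padic.nonarchimedean _ _) (max_le (by simp) ht)
        calc (p:ℝ)⁻¹ * ‖(1:ℚ_[p]) + t‖ ≤ (p:ℝ)⁻¹ * 1 :=
              mul_le_mul_of_nonneg_left h1t (by positivity)
          _ = _ := mul_one _
      have h2 : ‖∏ i ∈ (range k).erase (k - (p - m)), (x + (k:ℚ_[p]) - (i:ℚ_[p]))‖ ≤ 1 := by
        rw [norm_prod]
        exact Finset.prod_le_one (fun i _ => norm_nonneg _) (fun i _ => hxi2 i)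
      calc ‖x + (k:ℚ_[p]) - ((k - (p - m) : ℕ):ℚ_[p])‖ *
            ‖∏ i ∈ (range k).erase (k - (p - m)), (x + (k:ℚ_[p]) - (i:ℚ_[p]))‖
          ≤ (p:ℝ)⁻¹ * 1 := mul_le_mul h1 h2 (norm_nonneg _) (by positivity)
        _ = _ := mul_one _
    rw [gbinom, gbinom, norm_mul, norm_div, norm_div, hD, div_one, div_one, hpow2]
    exact mul_le_mul hP1 hP2 (norm_nonneg _) (by positivity)
end

section
/- Let p be an odd prime and x a p-adic integer with m := ⟨x⟩_p < (p-1)/2, written as x = m + p·t. Then for m+1 ≤ k ≤ p−1−m, C(x,k)*C(x+k,k) ≡ (−1)^(m+k+1) · p·t · C(m+k,k) / ((k−m)·C(k,m)) (mod p^2). -/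
open Finset

lemma aux_norm_nat_one {p : ℕ} [Fact p.Prime] (n : ℕ) (h : ¬ p ∣ n) :
    ‖(n : ℚ_[p])‖ = 1 := by
  have h1 : ‖((n : ℤ) : ℚ_[p])‖ ≤ 1 := Padic.norm_int_le_one _
  have h2 : ¬ ‖((n : ℤ) : ℚ_[p])‖ < 1 := by
    rw [Padic.norm_intCast_lt_one_iff]
    exact_mod_cast h
  have : ‖((n : ℤ) : ℚ_[p])‖ = 1 := le_antisymm h1 (not_lt.mp h2)
  simpa using this

lemma aux_prod_close {p : ℕ} [Fact p.Prime] (ε : ℝ) (hε0 : 0 ≤ ε) (hε1 : ε ≤ 1)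
    (f g : ℕ → ℚ_[p]) :
    ∀ (s : Finset ℕ), (∀ i ∈ s, ‖g i‖ ≤ 1) → (∀ i ∈ s, ‖f i - g i‖ ≤ ε) →
      ‖∏ i ∈ s, f i - ∏ i ∈ s, g i‖ ≤ ε := by
  intro s
  induction s using Finset.induction_on with
  | empty => intro _ _; simpa using hε0
  | insert a s ha ih =>
    intro hg hfg
    have h1 : ‖g a‖ ≤ 1 := hg a (mem_insert_self _ _)
    have h2 : ‖f a - g a‖ ≤ ε := hfg a (mem_insert_self _ _)
    have ih' : ‖∏ i ∈ s, f i - ∏ i ∈ s, g i‖ ≤ ε :=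
      ih (fun i hi => hg i (mem_insert_of_mem hi)) (fun i hi => hfg i (mem_insert_of_mem hi))
    have hfa : ‖f a‖ ≤ 1 := by
      have : f a = (f a - g a) + g a := by ring
      rw [this]
      exact le_trans (Padic.nonarchimedean _ _) (max_le (le_trans h2 hε1) h1)
    have hgs : ‖∏ i ∈ s, g i‖ ≤ 1 := by
      rw [norm_prod]
      exact Finset.prod_le_one (fun i _ => norm_nonneg _) (fun i hi => hg i (mem_insert_of_mem hi))
    rw [Finset.prod_insert ha, Finset.prod_insert ha]
    have key : f a * ∏ i ∈ s, f i - g a * ∏ i ∈ s, g i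
        = f a * (∏ i ∈ s, f i - ∏ i ∈ s, g i) + (f a - g a) * ∏ i ∈ s, g i := by ring
    rw [key]
    refine le_trans (Padic.nonarchimedean _ _) (max_le ?_ ?_)
    · rw [norm_mul]
      calc ‖f a‖ * ‖∏ i ∈ s, f i - ∏ i ∈ s, g i‖ ≤ 1 * ε :=
            mul_le_mul hfa ih' (norm_nonneg _) one_pos.le
        _ = ε := one_mul ε
    · rw [norm_mul]
      calc ‖f a - g a‖ * ‖∏ i ∈ s, g i‖ ≤ ε * 1 :=
            mul_le_mul h2 hgs (norm_nonneg _) hε0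
        _ = ε := mul_one ε

lemma aux_prodA (m k : ℕ) (hmk : m + 1 ≤ k) :
    ∏ i ∈ (Finset.range k).erase m, ((m : ℤ) - i)
      = (-1) ^ (k - 1 - m) * m.factorial * (k - 1 - m).factorial := by
  have hset : (Finset.range k).erase m = Finset.range m ∪ Finset.Ico (m+1) k := by
    ext i
    simp only [mem_erase, mem_range, mem_union, mem_Ico]
    omega
  have hdisj : Disjoint (Finset.range m) (Finset.Ico (m+1) k) := by
    rw [Finset.disjoint_left]
    intro i hi hi'
    simp only [mem_range] at hi
    simp only [mem_Ico] at hi'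
    omega
  rw [hset, Finset.prod_union hdisj]
  have part1 : ∏ i ∈ Finset.range m, ((m : ℤ) - i) = m.factorial := by
    have e1 : ∏ i ∈ Finset.range m, ((m : ℤ) - i)
        = ∏ i ∈ Finset.range m, (((m - 1 - i : ℕ) : ℤ) + 1) := by
      refine Finset.prod_congr rfl ?_
      intro i hi
      simp only [mem_range] at hi
      omega
    rw [e1, Finset.prod_range_reflect (fun j => ((j : ℕ) : ℤ) + 1) m]
    have := Finset.prod_range_add_one_eq_factorial m
    exact_mod_cast congrArg (Nat.cast : ℕ → ℤ) this
  have part2 : ∏ i ∈ Finset.Ico (m+1) k, ((m : ℤ) - i)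
      = (-1) ^ (k - 1 - m) * (k - 1 - m).factorial := by
    rw [Finset.prod_Ico_eq_prod_range]
    have hn : k - (m + 1) = k - 1 - m := by omega
    rw [hn]
    have e2 : ∏ i ∈ Finset.range (k - 1 - m), ((m : ℤ) - ((m + 1 + i : ℕ) : ℤ))
        = ∏ i ∈ Finset.range (k - 1 - m), ((-1) * ((i : ℤ) + 1)) := by
      refine Finset.prod_congr rfl ?_
      intro i _
      push_cast
      ring
    rw [e2, Finset.prod_mul_distrib, Finset.prod_const, Finset.card_range]
    congr 1
    have := Finset.prod_range_add_one_eq_factorial (k - 1 - m)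
    exact_mod_cast congrArg (Nat.cast : ℕ → ℤ) this
  rw [part1, part2]
  ring

lemma aux_prodB (m k : ℕ) :
    m.factorial * ∏ j ∈ Finset.range k, (m + k - j) = (m + k).factorial := by
  have e1 : ∏ j ∈ Finset.range k, (m + k - j)
      = ∏ j ∈ Finset.range k, (m + j + 1) := by
    have e2 : ∏ j ∈ Finset.range k, (m + k - j)
        = ∏ j ∈ Finset.range k, (m + (k - 1 - j) + 1) := by
      refine Finset.prod_congr rfl ?_
      intro j hj
      simp only [mem_range] at hj
      omega
    rw [e2, Finset.prod_range_reflect (fun j => m + j + 1) k]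
  rw [e1]
  clear e1
  induction k with
  | zero => simp
  | succ n ih =>
    rw [Finset.prod_range_succ, ← mul_assoc, ih]
    have : m + (n + 1) = (m + n) + 1 := by omega
    rw [this, Nat.factorial_succ]
    ring

theorem stmt_12 (p : ℕ) [Fact p.Prime] (hp : p ≠ 2) (x t : ℚ_[p]) (m : ℕ)
    (ht : ‖t‖ ≤ 1) (hx : x = (m : ℚ_[p]) + (p : ℚ_[p]) * t) (hm : m < (p - 1) / 2) :
    ∀ k : ℕ, m + 1 ≤ k → k ≤ p - 1 - m →
      ‖gbinom x k * gbinom (x + (k : ℚ_[p])) k -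
        (-1)^(m+k+1) * (p : ℚ_[p]) * t * ((m+k).choose k : ℚ_[p])
          / ((((k - m : ℕ) : ℚ_[p])) * (k.choose m : ℚ_[p]))‖
      ≤ (p : ℝ) ^ (-2 : ℤ) := by
  intro k hk1 hk2
  have hpprime : p.Prime := Fact.out
  have hp3 : 3 ≤ p := by
    have := hpprime.two_le
    omega
  have hmk : m + k ≤ p - 1 := by omega
  have hkp : k ≤ p - 1 := by omega
  have hppos : (0 : ℝ) < p := by positivity
  have hpinv_le : (p : ℝ)⁻¹ ≤ 1 := by
    rw [inv_le_one_iff₀]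
    right; exact_mod_cast by omega
  have hpinv_pos : (0 : ℝ) < (p : ℝ)⁻¹ := by positivity
  -- norm of p*t
  have hpt : ‖(p : ℚ_[p]) * t‖ ≤ (p : ℝ)⁻¹ := by
    rw [norm_mul, Padic.norm_p]
    calc (p : ℝ)⁻¹ * ‖t‖ ≤ (p : ℝ)⁻¹ * 1 :=
          mul_le_mul_of_nonneg_left ht hpinv_pos.le
      _ = (p : ℝ)⁻¹ := mul_one _
  -- factorial unit
  have hkfac : ‖((k.factorial : ℕ) : ℚ_[p])‖ = 1 := by
    apply aux_norm_nat_one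
    rw [hpprime.dvd_factorial]
    omega
  have hkfacne : ((k.factorial : ℕ) : ℚ_[p]) ≠ 0 := by
    exact_mod_cast Nat.cast_ne_zero.mpr k.factorial_ne_zero
  set P1 : ℚ_[p] := ∏ i ∈ Finset.range k, (x - i) with hP1def
  set P2 : ℚ_[p] := ∏ i ∈ Finset.range k, (x + (k : ℚ_[p]) - i) with hP2def
  set Qz : ℤ := ∏ i ∈ (Finset.range k).erase m, ((m : ℤ) - i) with hQzdef
  set Rn : ℕ := ∏ j ∈ Finset.range k, (m + k - j) with hRndef
  set Q : ℚ_[p] := ∏ i ∈ (Finset.range k).erase m, (x - i) with hQdef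
  -- P1 = p t Q
  have hmmem : m ∈ Finset.range k := by simp; omega
  have hP1 : P1 = (p : ℚ_[p]) * t * Q := by
    rw [hP1def, ← Finset.mul_prod_erase (Finset.range k) _ hmmem, ← hQdef]
    congr 1
    rw [hx]; ring
  -- Q close to Qz
  have hQclose : ‖Q - (Qz : ℚ_[p])‖ ≤ (p : ℝ)⁻¹ := by
    have hcast : ((Qz : ℤ) : ℚ_[p]) = ∏ i ∈ (Finset.range k).erase m, ((m : ℚ_[p]) - i) := by
      rw [hQzdef]; push_cast; rfl
    rw [hQdef, hcast]
    refine aux_prod_close _ hpinv_pos.le hpinv_le _ _ _ ?_ ?_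
    · intro i _
      have : (m : ℚ_[p]) - i = (((m : ℤ) - i : ℤ) : ℚ_[p]) := by push_cast; ring
      rw [this]
      exact Padic.norm_int_le_one _
    · intro i _
      have : x - i - ((m : ℚ_[p]) - i) = (p : ℚ_[p]) * t := by rw [hx]; ring
      rw [this]
      exact hpt
  -- P2 close to Rn
  have hRcast : ((Rn : ℕ) : ℚ_[p]) = ∏ j ∈ Finset.range k, (((m + k - j : ℕ)) : ℚ_[p]) := by
    rw [hRndef]; push_cast; rfl
  have hP2close : ‖P2 - (Rn : ℚ_[p])‖ ≤ (p : ℝ)⁻¹ := by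
    rw [hP2def, hRcast]
    refine aux_prod_close _ hpinv_pos.le hpinv_le _ _ _ ?_ ?_
    · intro j _
      have : (((m + k - j : ℕ)) : ℚ_[p]) = (((m + k - j : ℕ) : ℤ) : ℚ_[p]) := by push_cast; ring
      rw [this]
      exact Padic.norm_int_le_one _
    · intro j hj
      simp only [mem_range] at hj
      have hcj : (((m + k - j : ℕ)) : ℚ_[p]) = (m : ℚ_[p]) + k - j := by
        have : j ≤ m + k := by omega
        push_cast [Nat.cast_sub this]
        ring
      have : x + (k : ℚ_[p]) - j - (((m + k - j : ℕ)) : ℚ_[p]) = (p : ℚ_[p]) * t := by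
        rw [hcj, hx]; ring
      rw [this]
      exact hpt
  have hQz1 : ‖((Qz : ℤ) : ℚ_[p])‖ ≤ 1 := Padic.norm_int_le_one _
  have hP2le : ‖P2‖ ≤ 1 := by
    have h1 : ‖((Rn : ℕ) : ℚ_[p])‖ ≤ 1 := by
      have : ((Rn : ℕ) : ℚ_[p]) = (((Rn : ℕ) : ℤ) : ℚ_[p]) := by push_cast; ring
      rw [this]; exact Padic.norm_int_le_one _
    have : P2 = (P2 - (Rn : ℚ_[p])) + (Rn : ℚ_[p]) := by ring
    rw [this]
    exact le_trans (Padic.nonarchimedean _ _)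
      (max_le (le_trans hP2close hpinv_le) h1)
  -- key middle estimate
  have hmid : ‖Q * P2 - (Qz : ℚ_[p]) * (Rn : ℚ_[p])‖ ≤ (p : ℝ)⁻¹ := by
    have e : Q * P2 - (Qz : ℚ_[p]) * (Rn : ℚ_[p])
        = (Q - (Qz : ℚ_[p])) * P2 + (Qz : ℚ_[p]) * (P2 - (Rn : ℚ_[p])) := by ring
    rw [e]
    refine le_trans (Padic.nonarchimedean _ _) (max_le ?_ ?_)
    · rw [norm_mul]
      calc ‖Q - (Qz : ℚ_[p])‖ * ‖P2‖ ≤ (p : ℝ)⁻¹ * 1 :=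
            mul_le_mul hQclose hP2le (norm_nonneg _) hpinv_pos.le
        _ = (p : ℝ)⁻¹ := mul_one _
    · rw [norm_mul]
      calc ‖((Qz : ℤ) : ℚ_[p])‖ * ‖P2 - (Rn : ℚ_[p])‖ ≤ 1 * (p : ℝ)⁻¹ :=
            mul_le_mul hQz1 hP2close (norm_nonneg _) one_pos.le
        _ = (p : ℝ)⁻¹ := one_mul _
  -- numerator estimate
  have hnum : ‖P1 * P2 - (p : ℚ_[p]) * t * (Qz : ℚ_[p]) * (Rn : ℚ_[p])‖ ≤ (p : ℝ) ^ (-2 : ℤ) := by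
    have e : P1 * P2 - (p : ℚ_[p]) * t * (Qz : ℚ_[p]) * (Rn : ℚ_[p])
        = ((p : ℚ_[p]) * t) * (Q * P2 - (Qz : ℚ_[p]) * (Rn : ℚ_[p])) := by
      rw [hP1]; ring
    rw [e, norm_mul]
    have : (p : ℝ) ^ (-2 : ℤ) = (p : ℝ)⁻¹ * (p : ℝ)⁻¹ := by
      rw [show (-2 : ℤ) = (-1) + (-1) by norm_num, zpow_add₀ (ne_of_gt hppos)]
      simp [zpow_neg]
    rw [this]
    exact mul_le_mul hpt hmid (norm_nonneg _) hpinv_pos.le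
  -- exact identity for RHS term
  have hkmne : (((k - m : ℕ)) : ℚ_[p]) ≠ 0 := by
    exact_mod_cast Nat.cast_ne_zero.mpr (by omega : (k - m : ℕ) ≠ 0)
  have hchkm : ((k.choose m : ℕ) : ℚ_[p]) ≠ 0 :=
    Nat.cast_ne_zero.mpr (Nat.choose_pos (by omega : m ≤ k)).ne'
  have hchmk : (((m+k).choose k : ℕ) : ℚ_[p]) ≠ 0 :=
    Nat.cast_ne_zero.mpr (Nat.choose_pos (by omega : k ≤ m + k)).ne'
  have hmfacne : ((m.factorial : ℕ) : ℚ_[p]) ≠ 0 :=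
    Nat.cast_ne_zero.mpr m.factorial_ne_zero
  have hkmfacne : (((k-1-m).factorial : ℕ) : ℚ_[p]) ≠ 0 :=
    Nat.cast_ne_zero.mpr (k-1-m).factorial_ne_zero
  have eQ : ((Qz : ℤ) : ℚ_[p])
      = (-1) ^ (k - 1 - m) * (m.factorial : ℚ_[p]) * ((k - 1 - m).factorial : ℚ_[p]) := by
    rw [hQzdef, aux_prodA m k hk1]
    push_cast
    ring
  have eR : ((m.factorial : ℕ) : ℚ_[p]) * ((Rn : ℕ) : ℚ_[p]) = (((m+k).factorial : ℕ) : ℚ_[p]) := by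
    rw [hRndef]
    exact_mod_cast congrArg (Nat.cast : ℕ → ℚ_[p]) (aux_prodB m k)
  have e2 : (((m+k).choose k : ℕ) : ℚ_[p]) * (k.factorial : ℚ_[p]) * (m.factorial : ℚ_[p])
      = (((m+k).factorial : ℕ) : ℚ_[p]) := by
    have h := Nat.choose_mul_factorial_mul_factorial (show k ≤ m + k by omega)
    have h2 : (m + k) - k = m := by omega
    rw [h2] at h
    exact_mod_cast congrArg (Nat.cast : ℕ → ℚ_[p]) h
  have e3 : ((k.choose m : ℕ) : ℚ_[p]) * (m.factorial : ℚ_[p]) * (((k-m).factorial : ℕ) : ℚ_[p])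
      = (k.factorial : ℚ_[p]) := by
    have h := Nat.choose_mul_factorial_mul_factorial (show m ≤ k by omega)
    exact_mod_cast congrArg (Nat.cast : ℕ → ℚ_[p]) h
  have e4 : (((k-m).factorial : ℕ) : ℚ_[p])
      = (((k - m : ℕ)) : ℚ_[p]) * (((k-1-m).factorial : ℕ) : ℚ_[p]) := by
    have h1 : k - m = (k - 1 - m) + 1 := by omega
    rw [h1, Nat.factorial_succ]
    push_cast
    ring
  have sign : ((-1 : ℚ_[p])) ^ (m + k + 1) = (-1) ^ (k - 1 - m) := by
    rw [show m + k + 1 = (k - 1 - m) + 2 * (m + 1) by omega, pow_add, pow_mul]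
    norm_num
  have key : (-1 : ℚ_[p])^(m+k+1) * (p : ℚ_[p]) * t * ((m+k).choose k : ℚ_[p])
        / ((((k - m : ℕ) : ℚ_[p])) * (k.choose m : ℚ_[p]))
      = (p : ℚ_[p]) * t * (Qz : ℚ_[p]) * (Rn : ℚ_[p]) / ((k.factorial : ℚ_[p]))^2 := by
    have hfackm : (((k-m).factorial : ℕ) : ℚ_[p]) ≠ 0 :=
      Nat.cast_ne_zero.mpr (k-m).factorial_ne_zero
    have hC1 : (((m+k).choose k : ℕ) : ℚ_[p])
        = (((m+k).factorial : ℕ) : ℚ_[p]) / ((k.factorial : ℚ_[p]) * (m.factorial : ℚ_[p])) := by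
      field_simp
      linear_combination e2
    have hC2 : ((k.choose m : ℕ) : ℚ_[p])
        = (k.factorial : ℚ_[p]) / ((m.factorial : ℚ_[p]) * (((k-m).factorial : ℕ) : ℚ_[p])) := by
      field_simp
      linear_combination e3
    have hRval : ((Rn : ℕ) : ℚ_[p]) = (((m+k).factorial : ℕ) : ℚ_[p]) / (m.factorial : ℚ_[p]) := by
      field_simp
      linear_combination eR
    rw [sign, eQ, hRval, hC1, hC2, e4]
    field_simp
  -- final assembly
  have hgb : gbinom x k * gbinom (x + (k : ℚ_[p])) k = P1 * P2 / ((k.factorial : ℚ_[p]))^2 := by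
    unfold gbinom
    rw [← hP1def, ← hP2def, div_mul_div_comm, sq]
  rw [hgb, key]
  rw [div_sub_div_same, norm_div]
  rw [norm_pow, hkfac]
  simpa using hnum
end
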